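/- arXiv:1112.1124 — 7 statements merged into one kernel-verified Lean document; each statement's English description precedes it below -/
import Mathlib

section
/- Let S be a finite set of n ≥ d+1 points in ℝ^d. Then the convex hull of S can be partitioned into at most ⌈(n-1)/d⌉ closed convex bodies whose interiors are pairwise disjoint and each of whose interiors contains no point of S. -/
open Module Set
open scoped RealInnerProductSpace

namespace SteinerAux


variable {d : ℕ}

lemma inner_surj {v : EuclideanSpace ℝ (Fin d)} (hv : v ≠ 0) :
    Function.Surjective (innerSL ℝ v) := by
  intro y
  refine ⟨(y / ⟪v, v⟫) • v, ?_⟩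
  rw [innerSL_apply_apply, real_inner_smul_right]
  exact div_mul_cancel₀ y (inner_self_ne_zero.2 hv)

lemma aux_interior_le {v : EuclideanSpace ℝ (Fin d)} (hv : v ≠ 0) (c : ℝ) :
    interior {x : EuclideanSpace ℝ (Fin d) | ⟪v, x⟫ ≤ c} =
      {x : EuclideanSpace ℝ (Fin d) | ⟪v, x⟫ < c} := by
  have h1 : {x : EuclideanSpace ℝ (Fin d) | ⟪v, x⟫ ≤ c} = (innerSL ℝ v) ⁻¹' (Iic c) := rfl
  have h2 : {x : EuclideanSpace ℝ (Fin d) | ⟪v, x⟫ < c} = (innerSL ℝ v) ⁻¹' (Iio c) := rfl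
  rw [h1, h2, (innerSL ℝ v).interior_preimage (inner_surj hv), interior_Iic]

lemma aux_interior_ge {v : EuclideanSpace ℝ (Fin d)} (hv : v ≠ 0) (c : ℝ) :
    interior {x : EuclideanSpace ℝ (Fin d) | c ≤ ⟪v, x⟫} =
      {x : EuclideanSpace ℝ (Fin d) | c < ⟪v, x⟫} := by
  have h1 : {x : EuclideanSpace ℝ (Fin d) | c ≤ ⟪v, x⟫} = (innerSL ℝ v) ⁻¹' (Ici c) := rfl
  have h2 : {x : EuclideanSpace ℝ (Fin d) | c < ⟪v, x⟫} = (innerSL ℝ v) ⁻¹' (Ioi c) := rfl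
  rw [h1, h2, (innerSL ℝ v).interior_preimage (inner_surj hv), interior_Ici]

lemma isLinearMap_inner (v : EuclideanSpace ℝ (Fin d)) :
    IsLinearMap ℝ (fun x : EuclideanSpace ℝ (Fin d) => ⟪v, x⟫) :=
  ⟨fun x y => inner_add_right v x y, fun c x => real_inner_smul_right v x c⟩

lemma aux_convex_le (v : EuclideanSpace ℝ (Fin d)) (c : ℝ) :
    Convex ℝ {x : EuclideanSpace ℝ (Fin d) | ⟪v, x⟫ ≤ c} :=
  convex_halfSpace_le (isLinearMap_inner v) c

lemma aux_convex_ge (v : EuclideanSpace ℝ (Fin d)) (c : ℝ) :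
    Convex ℝ {x : EuclideanSpace ℝ (Fin d) | c ≤ ⟪v, x⟫} :=
  convex_halfSpace_ge (isLinearMap_inner v) c

lemma aux_closed_le (v : EuclideanSpace ℝ (Fin d)) (c : ℝ) :
    IsClosed {x : EuclideanSpace ℝ (Fin d) | ⟪v, x⟫ ≤ c} :=
  isClosed_le (innerSL ℝ v).continuous continuous_const

lemma aux_closed_ge (v : EuclideanSpace ℝ (Fin d)) (c : ℝ) :
    IsClosed {x : EuclideanSpace ℝ (Fin d) | c ≤ ⟪v, x⟫} :=
  isClosed_le continuous_const (innerSL ℝ v).continuous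

/-- max principle over a convex hull of a finset -/
lemma inner_le_of_mem_hull {S : Finset (EuclideanSpace ℝ (Fin d))}
    (v : EuclideanSpace ℝ (Fin d)) {M : ℝ} (hM : ∀ p ∈ S, ⟪v, p⟫ ≤ M)
    {x : EuclideanSpace ℝ (Fin d)} (hx : x ∈ convexHull ℝ (S : Set (EuclideanSpace ℝ (Fin d)))) :
    ⟪v, x⟫ ≤ M :=
  convexHull_min (fun p hp => hM p hp) (aux_convex_le v M) hx




lemma finrank_vectorSpan_finset_le (B : Finset (EuclideanSpace ℝ (Fin d))) (hB : B.Nonempty) :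
    finrank ℝ (vectorSpan ℝ (B : Set (EuclideanSpace ℝ (Fin d)))) ≤ B.card - 1 := by
  classical
  have hc : B.card = (B.card - 1) + 1 := by
    have := Finset.card_pos.2 hB; omega
  have h := finrank_vectorSpan_image_finset_le ℝ (id : EuclideanSpace ℝ (Fin d) → _) B hc
  rwa [Finset.image_id] at h

lemma sub_mem_vectorSpan {A : Finset (EuclideanSpace ℝ (Fin d))}
    {p b : EuclideanSpace ℝ (Fin d)} (hp : p ∈ A) (hb : b ∈ A) :
    p - b ∈ vectorSpan ℝ (A : Set (EuclideanSpace ℝ (Fin d))) := by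
  have h := vsub_mem_vectorSpan ℝ (s := (A : Set (EuclideanSpace ℝ (Fin d)))) hp hb
  simpa [vsub_eq_sub] using h

lemma inner_eq_of_orth {A : Finset (EuclideanSpace ℝ (Fin d))}
    {w : EuclideanSpace ℝ (Fin d)}
    (hw : w ∈ (vectorSpan ℝ (A : Set (EuclideanSpace ℝ (Fin d))))ᗮ)
    {p b : EuclideanSpace ℝ (Fin d)} (hp : p ∈ A) (hb : b ∈ A) :
    ⟪w, p⟫ = ⟪w, b⟫ := by
  have h0 : ⟪p - b, w⟫ = 0 :=
    (Submodule.mem_orthogonal _ w).1 hw _ (sub_mem_vectorSpan hp hb)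
  rw [inner_sub_left] at h0
  have := real_inner_comm p w
  have := real_inner_comm b w
  linarith [real_inner_comm p w, real_inner_comm b w]

lemma exists_hyperplane_of_card_le (hd : 0 < d) {B : Finset (EuclideanSpace ℝ (Fin d))}
    (hB : B.card ≤ d) :
    ∃ (v : EuclideanSpace ℝ (Fin d)) (c : ℝ), v ≠ 0 ∧ ∀ p ∈ B, ⟪v, p⟫ = c := by
  classical
  rcases B.eq_empty_or_nonempty with hBe | ⟨b, hb⟩
  · refine ⟨EuclideanSpace.single ⟨0, hd⟩ (1 : ℝ), 0, ?_, by simp [hBe]⟩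
    intro h
    have := congrArg (fun f : EuclideanSpace ℝ (Fin d) => f ⟨0, hd⟩) h
    simp at this
  · set V := vectorSpan ℝ (B : Set (EuclideanSpace ℝ (Fin d))) with hV
    have hfr : finrank ℝ V ≤ d - 1 := by
      have h1 := finrank_vectorSpan_finset_le B ⟨b, hb⟩
      have h2 : B.card - 1 ≤ d - 1 := by omega
      exact le_trans h1 h2
    have hVne : V ≠ ⊤ := by
      intro h
      rw [h] at hfr
      rw [finrank_top, finrank_euclideanSpace_fin] at hfr
      omega
    have hbot : Vᗮ ≠ ⊥ := by
      intro h
      exact hVne (Submodule.orthogonal_eq_bot_iff.1 h)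
    obtain ⟨v, hvV, hv0⟩ := Submodule.exists_mem_ne_zero_of_ne_bot hbot
    exact ⟨v, ⟪v, b⟫, hv0, fun p hp => inner_eq_of_orth hvV hp hb⟩

lemma support_aux (hd : 0 < d) {P : Finset (EuclideanSpace ℝ (Fin d))}
    (hP : ∀ (v : EuclideanSpace ℝ (Fin d)) (c : ℝ), v ≠ 0 → ∃ p ∈ P, ⟪v, p⟫ ≠ c) (k : ℕ) :
    ∃ (v : EuclideanSpace ℝ (Fin d)) (c : ℝ) (A : Finset (EuclideanSpace ℝ (Fin d))),
      v ≠ 0 ∧ A ⊆ P ∧ A.Nonempty ∧ (∀ p ∈ A, ⟪v, p⟫ = c) ∧ (∀ p ∈ P, ⟪v, p⟫ ≤ c) ∧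
      (∀ p ∈ P, ⟪v, p⟫ = c → p ∈ A) ∧
      min k (d - 1) ≤ finrank ℝ (vectorSpan ℝ (A : Set (EuclideanSpace ℝ (Fin d)))) := by
  classical
  induction k with
  | zero =>
    have hv0 : (EuclideanSpace.single (⟨0, hd⟩ : Fin d) (1 : ℝ)) ≠ 0 := by
      intro h
      have := congrArg (fun f : EuclideanSpace ℝ (Fin d) => f ⟨0, hd⟩) h
      simp at this
    set v0 := EuclideanSpace.single (⟨0, hd⟩ : Fin d) (1 : ℝ)
    obtain ⟨p, hp, -⟩ := hP v0 0 hv0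
    have hPne : P.Nonempty := ⟨p, hp⟩
    set M := P.sup' hPne (fun q => ⟪v0, q⟫) with hM
    refine ⟨v0, M, P.filter (fun q => ⟪v0, q⟫ = M), hv0, Finset.filter_subset _ _, ?_, ?_, ?_, ?_, ?_⟩
    · obtain ⟨i, hi, hieq⟩ := P.exists_mem_eq_sup' hPne (fun q => ⟪v0, q⟫)
      exact ⟨i, Finset.mem_filter.2 ⟨hi, hieq.symm⟩⟩
    · intro q hq; exact (Finset.mem_filter.1 hq).2
    · intro q hq; exact Finset.le_sup' _ hq
    · intro q hq hqe; exact Finset.mem_filter.2 ⟨hq, hqe⟩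
    · simp
  | succ k ih =>
    obtain ⟨v, c, A, hv0, hAP, hAne, hAeq, hPle, hAfull, hdim⟩ := ih
    set V := vectorSpan ℝ (A : Set (EuclideanSpace ℝ (Fin d))) with hVdef
    by_cases hfin : min (k+1) (d-1) ≤ finrank ℝ V
    · exact ⟨v, c, A, hv0, hAP, hAne, hAeq, hPle, hAfull, hfin⟩
    push_neg at hfin
    have hd2 : finrank ℝ V + 2 ≤ d := by omega
    obtain ⟨b, hbA⟩ := hAne
    -- pick w ⊥ V, w ∉ span {v}
    have hnotle : ¬ (Vᗮ ≤ Submodule.span ℝ {v}) := by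
      intro hle
      have h1 : finrank ℝ Vᗮ ≤ finrank ℝ (Submodule.span ℝ {v}) :=
        Submodule.finrank_mono hle
      have h2 : finrank ℝ (Submodule.span ℝ ({v} : Set (EuclideanSpace ℝ (Fin d)))) = 1 :=
        finrank_span_singleton hv0
      have h3 : finrank ℝ V + finrank ℝ Vᗮ = d := by
        have := V.finrank_add_finrank_orthogonal
        rwa [finrank_euclideanSpace_fin] at this
      omega
    obtain ⟨w0, hw0V, hw0span⟩ := SetLike.not_le_iff_exists.1 hnotle
    clear hnotle
    -- key step, for a suitable sign of w
    have key : ∀ w : EuclideanSpace ℝ (Fin d), w ∈ Vᗮ → w ∉ Submodule.span ℝ {v} →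
        (∃ q ∈ P, ⟪w, b⟫ < ⟪w, q⟫) →
        ∃ (v' : EuclideanSpace ℝ (Fin d)) (c' : ℝ) (A' : Finset (EuclideanSpace ℝ (Fin d))),
          v' ≠ 0 ∧ A' ⊆ P ∧ A'.Nonempty ∧ (∀ p ∈ A', ⟪v', p⟫ = c') ∧
          (∀ p ∈ P, ⟪v', p⟫ ≤ c') ∧ (∀ p ∈ P, ⟪v', p⟫ = c' → p ∈ A') ∧
          min (k+1) (d - 1) ≤
            finrank ℝ (vectorSpan ℝ ((A' : Finset (EuclideanSpace ℝ (Fin d))) :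
              Set (EuclideanSpace ℝ (Fin d)))) := by
      intro w hwV hwspan hq
      have hw0 : w ≠ 0 := fun h => hwspan (h ▸ Submodule.zero_mem _)
      have hAw : ∀ p ∈ A, ⟪w, p⟫ = ⟪w, b⟫ := fun p hp => inner_eq_of_orth hwV hp hbA
      set Q := P.filter (fun p => ⟪w, b⟫ < ⟪w, p⟫) with hQdef
      have hQne : Q.Nonempty := by
        obtain ⟨q, hqP, hqgt⟩ := hq
        exact ⟨q, Finset.mem_filter.2 ⟨hqP, hqgt⟩⟩
      have hQstrict : ∀ p ∈ Q, ⟪v, p⟫ < c := by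
        intro p hp
        obtain ⟨hpP, hpgt⟩ := Finset.mem_filter.1 hp
        rcases lt_or_eq_of_le (hPle p hpP) with h | h
        · exact h
        · exact absurd (hAw p (hAfull p hpP h)) (ne_of_gt hpgt)
      set t := Q.inf' hQne (fun p => (c - ⟪v, p⟫) / (⟪w, p⟫ - ⟪w, b⟫)) with htdef
      have htpos : 0 < t := by
        rw [htdef, Finset.lt_inf'_iff]
        intro p hp
        have h1 := hQstrict p hp
        have h2 := (Finset.mem_filter.1 hp).2
        exact div_pos (by linarith) (by linarith)
      set v' := v + t • w with hv'def
      set c' := c + t * ⟪w, b⟫ with hc'def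
      have hinner : ∀ x, ⟪v', x⟫ = ⟪v, x⟫ + t * ⟪w, x⟫ := by
        intro x
        rw [hv'def, inner_add_left, real_inner_smul_left]
      have hv'0 : v' ≠ 0 := by
        intro h
        apply hwspan
        rw [Submodule.mem_span_singleton]
        refine ⟨-t⁻¹, ?_⟩
        have hw' : t • w = -v := eq_neg_of_add_eq_zero_right (hv'def ▸ h)
        have hthis : t⁻¹ • (t • w) = t⁻¹ • (-v) := by rw [hw']
        rw [smul_smul, inv_mul_cancel₀ (ne_of_gt htpos), one_smul] at hthis
        rw [hthis, smul_neg, neg_smul]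
      have hle' : ∀ p ∈ P, ⟪v', p⟫ ≤ c' := by
        intro p hp
        rw [hinner, hc'def]
        by_cases hcase : ⟪w, b⟫ < ⟪w, p⟫
        · have hpQ : p ∈ Q := Finset.mem_filter.2 ⟨hp, hcase⟩
          have h1 : t ≤ (c - ⟪v, p⟫) / (⟪w, p⟫ - ⟪w, b⟫) := Finset.inf'_le _ hpQ
          have h2 : (0:ℝ) < ⟪w, p⟫ - ⟪w, b⟫ := by linarith
          have h3 : t * (⟪w, p⟫ - ⟪w, b⟫) ≤ c - ⟪v, p⟫ := by
            rw [← le_div_iff₀ h2]; exact h1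
          nlinarith
        · push_neg at hcase
          have := hPle p hp
          nlinarith
      set A' := P.filter (fun p => ⟪v', p⟫ = c') with hA'def
      have hAA' : A ⊆ A' := by
        intro p hp
        refine Finset.mem_filter.2 ⟨hAP hp, ?_⟩
        rw [hinner, hAeq p hp, hAw p hp, hc'def]
      obtain ⟨q0, hq0Q, hq0eq⟩ := Q.exists_mem_eq_inf' hQne (fun p => (c - ⟪v, p⟫) / (⟪w, p⟫ - ⟪w, b⟫))
      have hq0P : q0 ∈ P := (Finset.mem_filter.1 hq0Q).1
      have hq0gt : ⟪w, b⟫ < ⟪w, q0⟫ := (Finset.mem_filter.1 hq0Q).2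
      have hq0A' : q0 ∈ A' := by
        refine Finset.mem_filter.2 ⟨hq0P, ?_⟩
        rw [hinner, hc'def]
        have h2 : (0:ℝ) < ⟪w, q0⟫ - ⟪w, b⟫ := by linarith
        have : t * (⟪w, q0⟫ - ⟪w, b⟫) = c - ⟪v, q0⟫ := by
          rw [htdef, hq0eq, div_mul_cancel₀ _ (ne_of_gt h2)]
        linarith
      have hq0V : q0 - b ∉ V := by
        intro hmem
        have h0 : ⟪q0 - b, w⟫ = 0 := (Submodule.mem_orthogonal _ w).1 hwV _ hmem
        rw [inner_sub_left] at h0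
        have := real_inner_comm q0 w
        have := real_inner_comm b w
        linarith
      have hVlt : V < vectorSpan ℝ ((A' : Finset (EuclideanSpace ℝ (Fin d))) :
          Set (EuclideanSpace ℝ (Fin d))) := by
        refine SetLike.lt_iff_le_and_exists.2 ⟨?_, q0 - b, ?_, hq0V⟩
        · exact vectorSpan_mono ℝ (Finset.coe_subset.2 hAA')
        · exact sub_mem_vectorSpan hq0A' (hAA' hbA)
      have hfr : finrank ℝ V < finrank ℝ (vectorSpan ℝ ((A' : Finset (EuclideanSpace ℝ (Fin d))) :
          Set (EuclideanSpace ℝ (Fin d)))) := Submodule.finrank_lt_finrank_of_lt hVlt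
      refine ⟨v', c', A', hv'0, Finset.filter_subset _ _, ⟨q0, hq0A'⟩, ?_, hle', ?_, ?_⟩
      · intro p hp; exact (Finset.mem_filter.1 hp).2
      · intro p hp hpe; exact Finset.mem_filter.2 ⟨hp, hpe⟩
      · omega
    -- apply key with the right sign
    obtain ⟨q, hqP, hqne⟩ := hP w0 ⟪w0, b⟫ (fun h => hw0span (h ▸ Submodule.zero_mem _))
    rcases lt_or_gt_of_ne hqne with hlt | hgt
    · refine key (-w0) (Submodule.neg_mem _ hw0V) ?_ ⟨q, hqP, ?_⟩
      · intro h
        exact hw0span (by simpa using Submodule.neg_mem _ h)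
      · rw [inner_neg_left, inner_neg_left]
        linarith
    · exact key w0 hw0V hw0span ⟨q, hqP, hgt⟩

lemma exists_support (hd : 0 < d) {P : Finset (EuclideanSpace ℝ (Fin d))}
    (hP : ∀ (v : EuclideanSpace ℝ (Fin d)) (c : ℝ), v ≠ 0 → ∃ p ∈ P, ⟪v, p⟫ ≠ c) :
    ∃ (v : EuclideanSpace ℝ (Fin d)) (c : ℝ) (A : Finset (EuclideanSpace ℝ (Fin d))),
      v ≠ 0 ∧ A ⊆ P ∧ (∀ p ∈ A, ⟪v, p⟫ = c) ∧ (∀ p ∈ P, ⟪v, p⟫ ≤ c) ∧ d ≤ A.card := by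
  obtain ⟨v, c, A, hv0, hAP, hAne, hAeq, hPle, -, hdim⟩ := support_aux hd hP (d-1)
  refine ⟨v, c, A, hv0, hAP, hAeq, hPle, ?_⟩
  have h1 := finrank_vectorSpan_finset_le A hAne
  have h2 : 0 < A.card := Finset.card_pos.2 hAne
  omega

lemma partition_aux (hd : 0 < d) (m : ℕ) :
    ∀ (C : Set (EuclideanSpace ℝ (Fin d))), Convex ℝ C → IsCompact C →
    ∀ (P : Finset (EuclideanSpace ℝ (Fin d))), P.card ≤ m →
    ∃ 𝒯 : Finset (Set (EuclideanSpace ℝ (Fin d))),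
      (∀ t ∈ 𝒯, Convex ℝ t ∧ IsCompact t ∧ t ⊆ C ∧ ∀ p ∈ P, p ∉ interior t) ∧
      (⋃ t ∈ 𝒯, t) = C ∧
      ((𝒯 : Set (Set (EuclideanSpace ℝ (Fin d)))).Pairwise
        fun t₁ t₂ => interior t₁ ∩ interior t₂ = ∅) ∧
      𝒯.card ≤ (P.card + (d - 1)) / d + 1 := by
  classical
  induction m using Nat.strong_induction_on with
  | _ m IH =>
  intro C hC hcomp P hPm
  rcases P.eq_empty_or_nonempty with hPe | hPne
  · refine ⟨{C}, ?_, ?_, ?_, ?_⟩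
    · intro t ht
      rw [Finset.mem_singleton] at ht
      subst ht
      exact ⟨hC, hcomp, subset_rfl, by simp [hPe]⟩
    · simp
    · simp
    · simp
  by_cases hhyp : ∃ (v : EuclideanSpace ℝ (Fin d)) (c : ℝ), v ≠ 0 ∧ ∀ p ∈ P, ⟪v, p⟫ = c
  · -- all points on one hyperplane: two tiles
    obtain ⟨v, c, hv0, hvc⟩ := hhyp
    set T₁ := C ∩ {x : EuclideanSpace ℝ (Fin d) | ⟪v, x⟫ ≤ c} with hT₁
    set T₂ := C ∩ {x : EuclideanSpace ℝ (Fin d) | c ≤ ⟪v, x⟫} with hT₂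
    have hiT₁ : interior T₁ ⊆ {x : EuclideanSpace ℝ (Fin d) | ⟪v, x⟫ < c} := by
      rw [← aux_interior_le hv0 c]
      exact interior_mono inter_subset_right
    have hiT₂ : interior T₂ ⊆ {x : EuclideanSpace ℝ (Fin d) | c < ⟪v, x⟫} := by
      rw [← aux_interior_ge hv0 c]
      exact interior_mono inter_subset_right
    refine ⟨{T₁, T₂}, ?_, ?_, ?_, ?_⟩
    · intro t ht
      rw [Finset.mem_insert, Finset.mem_singleton] at ht
      rcases ht with rfl | rfl
      · refine ⟨hC.inter (aux_convex_le v c), hcomp.inter_right (aux_closed_le v c),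
          inter_subset_left, ?_⟩
        intro p hp hpin
        exact absurd (hvc p hp) (ne_of_lt (hiT₁ hpin))
      · refine ⟨hC.inter (aux_convex_ge v c), hcomp.inter_right (aux_closed_ge v c),
          inter_subset_left, ?_⟩
        intro p hp hpin
        exact absurd (hvc p hp) (ne_of_gt (hiT₂ hpin))
    · ext x
      simp only [Finset.mem_insert, Finset.mem_singleton, Set.mem_iUnion]
      constructor
      · rintro ⟨t, (rfl | rfl), hxt⟩
        · exact hxt.1
        · exact hxt.1
      · intro hx
        rcases le_total (⟪v, x⟫) c with h | h
        · exact ⟨T₁, Or.inl rfl, ⟨hx, h⟩⟩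
        · exact ⟨T₂, Or.inr rfl, ⟨hx, h⟩⟩
    · intro t₁ h₁ t₂ h₂ hne
      simp only [Finset.coe_insert, Finset.coe_singleton, Set.mem_insert_iff,
        Set.mem_singleton_iff] at h₁ h₂
      have key : interior T₁ ∩ interior T₂ = ∅ := by
        rw [Set.eq_empty_iff_forall_notMem]
        rintro x ⟨hx1, hx2⟩
        have h1 : ⟪v, x⟫ < c := hiT₁ hx1
        have h2 : c < ⟪v, x⟫ := hiT₂ hx2
        linarith
      rcases h₁ with rfl | rfl <;> rcases h₂ with rfl | rfl
      · exact absurd rfl hne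
      · exact key
      · rw [Set.inter_comm]; exact key
      · exact absurd rfl hne
    · calc ({T₁, T₂} : Finset (Set (EuclideanSpace ℝ (Fin d)))).card
          ≤ 2 := le_trans (Finset.card_insert_le _ _) (by simp)
        _ ≤ (P.card + (d - 1)) / d + 1 := by
            have h1 : 1 ≤ P.card := Finset.card_pos.2 hPne
            have : d ≤ P.card + (d - 1) := by omega
            have := Nat.one_le_div_iff hd |>.2 this
            omega
  · push_neg at hhyp
    obtain ⟨v, c, A, hv0, hAP, hAeq, hPle, hdA⟩ := exists_support hd hhyp
    set P' := P \ A with hP'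
    have hAcard : A.card ≤ P.card := Finset.card_le_card hAP
    have hP'card : P'.card + d ≤ P.card := by
      rw [hP', Finset.card_sdiff_of_subset hAP]
      omega
    have hP'lt : P'.card < m := by
      have h1 : 1 ≤ P.card := Finset.card_pos.2 hPne
      omega
    set C' := C ∩ {x : EuclideanSpace ℝ (Fin d) | ⟪v, x⟫ ≤ c} with hC'
    obtain ⟨𝒯', h𝒯'mem, h𝒯'union, h𝒯'pair, h𝒯'card⟩ :=
      IH P'.card hP'lt C' (hC.inter (aux_convex_le v c)) (hcomp.inter_right (aux_closed_le v c)) P' le_rfl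
    set T₀ := C ∩ {x : EuclideanSpace ℝ (Fin d) | c ≤ ⟪v, x⟫} with hT₀
    have hiT₀ : interior T₀ ⊆ {x : EuclideanSpace ℝ (Fin d) | c < ⟪v, x⟫} := by
      rw [← aux_interior_ge hv0 c]
      exact interior_mono inter_subset_right
    have hsubC' : ∀ t ∈ 𝒯', interior t ⊆ {x : EuclideanSpace ℝ (Fin d) | ⟪v, x⟫ < c} := by
      intro t ht
      rw [← aux_interior_le hv0 c]
      exact interior_mono ((h𝒯'mem t ht).2.2.1.trans inter_subset_right)
    refine ⟨insert T₀ 𝒯', ?_, ?_, ?_, ?_⟩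
    · intro t ht
      rcases Finset.mem_insert.1 ht with rfl | ht
      · refine ⟨hC.inter (aux_convex_ge v c), hcomp.inter_right (aux_closed_ge v c),
          inter_subset_left, ?_⟩
        intro p hp hpin
        exact absurd (hPle p hp) (not_le.2 (hiT₀ hpin))
      · obtain ⟨hconv, hcpt, hsub, hint⟩ := h𝒯'mem t ht
        refine ⟨hconv, hcpt, hsub.trans inter_subset_left, ?_⟩
        intro p hp hpin
        by_cases hpA : p ∈ A
        · exact absurd (hAeq p hpA) (ne_of_lt (hsubC' t ht hpin))
        · exact hint p (Finset.mem_sdiff.2 ⟨hp, hpA⟩) hpin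
    · rw [Finset.set_biUnion_insert, h𝒯'union]
      ext x
      constructor
      · rintro (hx | hx)
        · exact hx.1
        · exact hx.1
      · intro hx
        rcases le_total (⟪v, x⟫) c with h | h
        · exact Or.inr ⟨hx, h⟩
        · exact Or.inl ⟨hx, h⟩
    · rw [Finset.coe_insert]
      apply Set.Pairwise.insert h𝒯'pair
      intro t ht hne
      have key : interior T₀ ∩ interior t = ∅ := by
        rw [Set.eq_empty_iff_forall_notMem]
        rintro x ⟨hx1, hx2⟩
        have h1 : ⟪v, x⟫ < c := hsubC' t ht hx2
        have h2 : c < ⟪v, x⟫ := hiT₀ hx1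
        linarith
      exact ⟨key, by rw [Set.inter_comm]; exact key⟩
    · calc (insert T₀ 𝒯').card ≤ 𝒯'.card + 1 := Finset.card_insert_le _ _
        _ ≤ (P'.card + (d - 1)) / d + 1 + 1 := by omega
        _ ≤ (P.card + (d - 1)) / d + 1 := by
            have h1 : (P'.card + (d - 1)) / d + 1 = (P'.card + (d - 1) + d) / d :=
              (Nat.add_div_right _ hd).symm
            have h2 : P'.card + (d - 1) + d ≤ P.card + (d - 1) := by omega
            have h3 := Nat.div_le_div_right (c := d) h2
            omega

end SteinerAux

open SteinerAux



/-- A Steiner convex partition of a finite point set `S ⊆ ℝ^d`: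
a finite collection of compact convex tiles with pairwise disjoint interiors
whose union is `conv(S)`, none of whose interiors contains a point of `S`. -/
def IsSteinerConvexPartition (d : ℕ) (S : Finset (EuclideanSpace ℝ (Fin d)))
    (𝒯 : Finset (Set (EuclideanSpace ℝ (Fin d)))) : Prop :=
  (∀ t ∈ 𝒯, Convex ℝ t ∧ IsCompact t ∧ ∀ p ∈ S, p ∉ interior t) ∧
  (⋃ t ∈ 𝒯, t) = convexHull ℝ (S : Set (EuclideanSpace ℝ (Fin d))) ∧
  ((𝒯 : Set (Set (EuclideanSpace ℝ (Fin d)))).Pairwise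
    fun t₁ t₂ => interior t₁ ∩ interior t₂ = ∅)

/-- Any set of `n ≥ d+1` points in `ℝ^d` admits a Steiner convex partition
with at most `⌈(n-1)/d⌉` tiles. -/
theorem steiner_partition_upper_bound (d : ℕ) (hd : 0 < d)
    (S : Finset (EuclideanSpace ℝ (Fin d))) (hS : d + 1 ≤ S.card) :
    ∃ 𝒯 : Finset (Set (EuclideanSpace ℝ (Fin d))),
      IsSteinerConvexPartition d S 𝒯 ∧
      𝒯.card ≤ ⌈((S.card : ℚ) - 1) / d⌉₊ := by

  classical
  set C := convexHull ℝ (S : Set (EuclideanSpace ℝ (Fin d))) with hCdef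
  have hC : Convex ℝ C := convex_convexHull ℝ _
  have hcomp : IsCompact C := S.finite_toSet.isCompact_convexHull ℝ
  have hSne : S.Nonempty := Finset.card_pos.1 (by omega)
  have hdQ : (0:ℚ) < (d:ℚ) := by exact_mod_cast hd
  by_cases hint : (interior C).Nonempty
  · obtain ⟨x₀, hx₀⟩ := hint
    set P := S.filter (fun p => p ∈ interior C) with hPdef
    set B := S.filter (fun p => ¬ (p ∈ interior C)) with hBdef
    -- maximizers can be chosen outside the interior
    have hmax : ∀ u : EuclideanSpace ℝ (Fin d), u ≠ 0 →
        ∃ p ∈ S, p ∉ interior C ∧ ∀ p' ∈ S, ⟪u, p'⟫ ≤ ⟪u, p⟫ := by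
      intro u hu
      obtain ⟨p₀, hp₀S, hp₀max⟩ := S.exists_mem_eq_sup' hSne (fun q => ⟪u, q⟫)
      refine ⟨p₀, hp₀S, ?_, fun p' hp' => hp₀max ▸ Finset.le_sup' _ hp'⟩
      intro hp₀int
      obtain ⟨ε, hε, hball⟩ := Metric.isOpen_iff.1 isOpen_interior p₀ hp₀int
      have hun : (0:ℝ) < ‖u‖ := norm_pos_iff.2 hu
      set x := p₀ + (ε / (2 * ‖u‖)) • u with hx
      have hxball : x ∈ Metric.ball p₀ ε := by
        rw [Metric.mem_ball, hx, dist_self_add_left, norm_smul, Real.norm_eq_abs,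
          abs_of_pos (by positivity), div_mul_eq_mul_div, div_lt_iff₀ (by positivity)]
        nlinarith
      have hxC : x ∈ C := interior_subset (hball hxball)
      have hle : ⟪u, x⟫ ≤ ⟪u, p₀⟫ :=
        inner_le_of_mem_hull u (fun p hp => hp₀max ▸ Finset.le_sup' _ hp) hxC
      have heq : ⟪u, x⟫ = ⟪u, p₀⟫ + (ε / (2 * ‖u‖)) * ⟪u, u⟫ := by
        rw [hx, inner_add_right, real_inner_smul_right]
      have hpos : 0 < (ε / (2 * ‖u‖)) * ⟪u, u⟫ := by
        rw [real_inner_self_eq_norm_sq]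
        positivity
      linarith
    have hBcard : d + 1 ≤ B.card := by
      by_contra hlt
      push_neg at hlt
      obtain ⟨v, c, hv0, hvc⟩ := exists_hyperplane_of_card_le hd (B := B) (by omega)
      have hSin : ∀ p ∈ S, ⟪v, p⟫ = c := by
        obtain ⟨p₀, hp₀S, hp₀B, hp₀max⟩ := hmax v hv0
        obtain ⟨p₁, hp₁S, hp₁B, hp₁max⟩ := hmax (-v) (neg_ne_zero.2 hv0)
        have hc₀ : ⟪v, p₀⟫ = c := hvc p₀ (Finset.mem_filter.2 ⟨hp₀S, hp₀B⟩)
        have hc₁ : ⟪v, p₁⟫ = c := hvc p₁ (Finset.mem_filter.2 ⟨hp₁S, hp₁B⟩)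
        intro p hp
        have h1 := hp₀max p hp
        have h2 := hp₁max p hp
        rw [inner_neg_left, inner_neg_left] at h2
        linarith
      have hCle : C ⊆ {x : EuclideanSpace ℝ (Fin d) | ⟪v, x⟫ ≤ c} :=
        convexHull_min (fun p hp => le_of_eq (hSin p hp)) (aux_convex_le v c)
      have hCge : C ⊆ {x : EuclideanSpace ℝ (Fin d) | c ≤ ⟪v, x⟫} :=
        convexHull_min (fun p hp => le_of_eq (hSin p hp).symm) (aux_convex_ge v c)
      have h1 : ⟪v, x₀⟫ < c := by
        have := interior_mono hCle hx₀
        rwa [aux_interior_le hv0 c] at this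
      have h2 : c < ⟪v, x₀⟫ := by
        have := interior_mono hCge hx₀
        rwa [aux_interior_ge hv0 c] at this
      linarith
    have hPBcard : P.card + B.card = S.card :=
      Finset.card_filter_add_card_filter_not _
    obtain ⟨𝒯, hmem, hunion, hpair, hcard⟩ :=
      partition_aux hd P.card C hC hcomp P le_rfl
    refine ⟨𝒯, ⟨?_, hunion, hpair⟩, ?_⟩
    · intro t ht
      obtain ⟨hconv, hcpt, hsub, hint'⟩ := hmem t ht
      refine ⟨hconv, hcpt, ?_⟩
      intro p hp hpint
      by_cases hpi : p ∈ interior C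
      · exact hint' p (Finset.mem_filter.2 ⟨hp, hpi⟩) hpint
      · exact hpi (interior_mono hsub hpint)
    · refine le_trans hcard ?_
      set j := (P.card + (d - 1)) / d with hj
      have hjd : j * d ≤ P.card + (d - 1) := Nat.div_mul_le_self _ _
      have hnat : j * d + 2 ≤ S.card := by omega
      refine Nat.add_one_le_iff.2 (Nat.lt_ceil.2 ?_)
      rw [lt_div_iff₀ hdQ]
      have hq : ((j * d : ℕ) : ℚ) + 2 ≤ (S.card : ℚ) := by exact_mod_cast hnat
      push_cast at hq ⊢
      linarith
  · have hie : interior C = ∅ := Set.not_nonempty_iff_eq_empty.1 hint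
    refine ⟨{C}, ⟨?_, ?_, ?_⟩, ?_⟩
    · intro t ht
      rw [Finset.mem_singleton] at ht
      subst ht
      exact ⟨hC, hcomp, fun p _ => by simp [hie]⟩
    · simp [hCdef]
    · simp
    · rw [Finset.card_singleton]
      refine Nat.ceil_pos.2 (div_pos ?_ hdQ)
      have h2 : 2 ≤ S.card := by omega
      have : (2:ℚ) ≤ (S.card:ℚ) := by exact_mod_cast h2
      linarith
end

section
/- Let S be a finite set of points in ℝ^d, let A be the set of vertices of conv(S), and let B = S \ A be nonempty with |B| ≥ d. If H is the supporting hyperplane of a (d-1)-dimensional face of conv(B), with H⁺ the closed halfspace containing B, then the set conv(S) ∩ cl(H⁻) is a convex body whose interior contains no point of S. -/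
open scoped RealInnerProductSpace

/-- One step of the greedy slicing algorithm. Let `A` be the set of vertices
(extreme points) of `conv S`, `B = S \ A` with `|B| ≥ d`. Let
`H = {x | ⟪u,x⟫ = c}` be the supporting hyperplane of a `(d-1)`-dimensional
face of `conv B`, with `B` contained in the halfspace `{x | c ≤ ⟪u,x⟫}`.
Then `conv(S) ∩ {x | ⟪u,x⟫ ≤ c}` is a convex body whose interior contains
no point of `S`. -/
theorem slice_step_empty (d : ℕ) (hd : 0 < d)
    (S A B : Finset (EuclideanSpace ℝ (Fin d)))
    (hA : (A : Set (EuclideanSpace ℝ (Fin d))) =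
      (S : Set (EuclideanSpace ℝ (Fin d))) ∩
        Set.extremePoints ℝ (convexHull ℝ (S : Set (EuclideanSpace ℝ (Fin d)))))
    (hB : (B : Set (EuclideanSpace ℝ (Fin d))) = (S : Set (EuclideanSpace ℝ (Fin d))) \ (A : Set (EuclideanSpace ℝ (Fin d)))) (hBne : B.Nonempty) (hBcard : d ≤ B.card)
    (u : EuclideanSpace ℝ (Fin d)) (hu : u ≠ 0) (c : ℝ)
    (hsupp : ∀ b ∈ B, c ≤ ⟪u, b⟫)
    -- `H` supports a `(d-1)`-dimensional face of `conv B`: it contains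
    -- `d` affinely independent points of `B`.
    (hface : ∃ p : Fin d → EuclideanSpace ℝ (Fin d), AffineIndependent ℝ p ∧
      ∀ i, p i ∈ (B : Set (EuclideanSpace ℝ (Fin d))) ∧ ⟪u, p i⟫ = c) :
    Convex ℝ (convexHull ℝ (S : Set (EuclideanSpace ℝ (Fin d))) ∩ {x | ⟪u, x⟫ ≤ c}) ∧
    IsCompact (convexHull ℝ (S : Set (EuclideanSpace ℝ (Fin d))) ∩ {x | ⟪u, x⟫ ≤ c}) ∧
    ∀ p ∈ S, p ∉ interior (convexHull ℝ (S : Set (EuclideanSpace ℝ (Fin d))) ∩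
      {x | ⟪u, x⟫ ≤ c}) := by
  classical
  set T := convexHull ℝ (S : Set (EuclideanSpace ℝ (Fin d))) ∩ {x | ⟪u, x⟫ ≤ c} with hT
  have hlin : IsLinearMap ℝ (fun x : EuclideanSpace ℝ (Fin d) => ⟪u, x⟫) :=
    ⟨fun x y => inner_add_right u x y, fun a x => real_inner_smul_right u x a⟩
  have hconv : Convex ℝ T := (convex_convexHull ℝ _).inter (convex_halfSpace_le hlin c)
  have hcl : IsClosed {x : EuclideanSpace ℝ (Fin d) | ⟪u, x⟫ ≤ c} :=
    isClosed_le (innerSL ℝ u).continuous continuous_const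
  have hcpt : IsCompact T := (S.finite_toSet.isCompact_convexHull (𝕜 := ℝ)).inter_right hcl
  refine ⟨hconv, hcpt, ?_⟩
  intro p hp hmem
  obtain ⟨ε, hε, hball⟩ := Metric.isOpen_iff.1 isOpen_interior p hmem
  have hnu : (0:ℝ) < ‖u‖ := norm_pos_iff.2 hu
  set t : ℝ := ε / (2 * ‖u‖) with ht
  have htpos : 0 < t := div_pos hε (by positivity)
  have hdist : ∀ s : ℝ, |s| ≤ t → p + s • u ∈ Metric.ball p ε := by
    intro s hs
    have : dist (p + s • u) p = |s| * ‖u‖ := by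
      rw [dist_eq_norm]
      simp [norm_smul, abs_eq_self.2, Real.norm_eq_abs]
    rw [Metric.mem_ball, this]
    calc |s| * ‖u‖ ≤ t * ‖u‖ := by
            exact mul_le_mul_of_nonneg_right hs (le_of_lt hnu)
      _ = ε / 2 := by rw [ht]; field_simp
      _ < ε := by linarith
  have hsub : ∀ s : ℝ, |s| ≤ t → p + s • u ∈ T := fun s hs =>
    interior_subset (hball (hdist s hs))
  by_cases hpA : p ∈ A
  · -- p is an extreme point of conv S
    have hext : p ∈ Set.extremePoints ℝ (convexHull ℝ (S : Set (EuclideanSpace ℝ (Fin d)))) := by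
      have : (p : EuclideanSpace ℝ (Fin d)) ∈ (A : Set (EuclideanSpace ℝ (Fin d))) := hpA
      rw [hA] at this
      exact this.2
    have h1 : p + t • u ∈ convexHull ℝ (S : Set (EuclideanSpace ℝ (Fin d))) :=
      (hsub t (by rw [abs_of_pos htpos])).1
    have h2 : p + (-t) • u ∈ convexHull ℝ (S : Set (EuclideanSpace ℝ (Fin d))) :=
      (hsub (-t) (by rw [abs_neg, abs_of_pos htpos])).1
    have hseg : p ∈ openSegment ℝ (p + t • u) (p + (-t) • u) := by
      refine ⟨1/2, 1/2, by norm_num, by norm_num, by norm_num, ?_⟩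
      simp only [smul_add, smul_smul, neg_smul]
      module
    have := hext.2 h1 h2 hseg
    have htu : t • u = 0 := by
      have := congrArg (· - p) this
      simpa [add_sub_cancel_left] using this
    exact hu (by simpa [smul_eq_zero, ne_of_gt htpos] using htu)
  · -- p ∈ B
    have hpB : p ∈ B := by
      have : (p : EuclideanSpace ℝ (Fin d)) ∈ (B : Set (EuclideanSpace ℝ (Fin d))) := by
        rw [hB]; exact ⟨hp, hpA⟩
      exact this
    have hle : ⟪u, p⟫ ≤ c := (interior_subset hmem).2
    have heq : ⟪u, p⟫ = c := le_antisymm hle (hsupp p hpB)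
    have hmem2 : p + t • u ∈ T := hsub t (by rw [abs_of_pos htpos])
    have : ⟪u, p + t • u⟫ ≤ c := hmem2.2
    rw [inner_add_right, real_inner_smul_right, real_inner_self_eq_norm_sq, heq] at this
    have : 0 < t * ‖u‖ ^ 2 := mul_pos htpos (pow_pos hnu 2)
    linarith
end

section
/- Let C ⊆ [0,1]^d be a convex body, m a positive integer, G(m) = {(i₁,...,i_d)/m : 0 ≤ iⱼ ≤ m integers} the grid, and D = conv(C ∩ G(m)). Then vol(C) − vol(D) ≤ c(d)/m for a constant c(d) depending only on d (one may take c(d) = 4d²). -/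
open MeasureTheory Set ENNReal

section helpers

lemma slab_vol' (d : ℕ) (A B : Fin d → ℝ) :
    volume {x : EuclideanSpace ℝ (Fin d) | ∀ i, x i ∈ Icc (A i) (B i)} =
      ∏ i, ENNReal.ofReal (B i - A i) := by
  have h := (EuclideanSpace.volume_preserving_symm_measurableEquiv_toLp (Fin d)).measure_preimage
    (s := Set.univ.pi fun i => Icc (A i) (B i)) (MeasurableSet.univ_pi (fun i => measurableSet_Icc)).nullMeasurableSet
  have heq : (MeasurableEquiv.toLp 2 (Fin d → ℝ)).symm ⁻¹' (Set.univ.pi fun i => Icc (A i) (B i))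
      = {x : EuclideanSpace ℝ (Fin d) | ∀ i, x i ∈ Icc (A i) (B i)} := by
    ext x; simp only [Set.mem_preimage,
      Set.mem_pi, Set.mem_univ, true_implies, Set.mem_setOf_eq, Set.mem_Icc]
    constructor
    · intro hx i; exact hx i
    · intro hx i; exact hx i
  rw [heq] at h
  rw [h, volume_pi_pi]
  simp [Real.volume_Icc]

lemma key_count' (d N : ℕ) (C : Set (EuclideanSpace ℝ (Fin d)))
    (hC : Convex ℝ C) (hmeas : MeasurableSet C) (v : EuclideanSpace ℝ (Fin d))
    (S : Set (EuclideanSpace ℝ (Fin d)))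
    (hbox : ∀ (k : ℕ), k < N → ∀ x, x + (k : ℝ) • v ∈ C → x ∈ S) :
    (N : ℝ≥0∞) * volume (C \ {x | x + v ∈ C}) ≤ volume S := by
  set T : Set (EuclideanSpace ℝ (Fin d)) := C \ {x | x + v ∈ C} with hT
  have hTmeas : MeasurableSet T :=
    hmeas.diff ((measurable_add_const v) hmeas)
  set f : Fin N → Set (EuclideanSpace ℝ (Fin d)) := fun k => (fun x => x + (k : ℝ) • v) ⁻¹' T with hf
  have hfmeas : ∀ k, MeasurableSet (f k) := fun k => (measurable_add_const _) hTmeas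
  have hdisj0 : ∀ k l : Fin N, (k : ℕ) < (l : ℕ) → Disjoint (f k) (f l) := by
    intro k l hlt
    rw [Set.disjoint_left]
    rintro x hxk hxl
    simp only [hf, Set.mem_preimage, hT, Set.mem_diff, Set.mem_setOf_eq] at hxk hxl
    -- x + k•v ∈ C, x + k•v + v ∉ C, x + l•v ∈ C
    apply hxk.2
    -- x + (k+1)•v is a convex combination of x + k•v and x + l•v
    have hk1 : (k : ℕ) + 1 ≤ (l : ℕ) := hlt
    set a : ℝ := ((l : ℕ) - ((k : ℕ) + 1)) / ((l : ℕ) - (k : ℕ)) with ha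
    set b : ℝ := 1 / ((l : ℕ) - (k : ℕ)) with hb
    have hpos : (0 : ℝ) < (l : ℕ) - (k : ℕ) := by
      have : ((k : ℕ) : ℝ) < ((l : ℕ) : ℝ) := by exact_mod_cast hlt
      linarith
    have hcast : ((k : ℕ) : ℝ) + 1 ≤ ((l : ℕ) : ℝ) := by exact_mod_cast hk1
    have hcomb := hC hxk.1 hxl.1 (a := a) (b := b)
      (by rw [ha]; apply div_nonneg <;> linarith) (by positivity)
      (by rw [ha, hb]; field_simp; ring)
    have hab : a + b = 1 := by rw [ha, hb]; field_simp; ring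
    have h2 : a * (k : ℝ) + b * (l : ℝ) = (k : ℝ) + 1 := by
      rw [ha, hb]; field_simp; ring
    have heq2 : a • (x + (k : ℝ) • v) + b • (x + (l : ℝ) • v) = x + (k : ℝ) • v + v := by
      match_scalars
      · linear_combination hab
      · linear_combination h2
    rwa [heq2] at hcomb
  have hdisj : Pairwise (Function.onFun Disjoint f) := by
    intro k l hkl
    rcases Nat.lt_or_ge (k : ℕ) (l : ℕ) with h | h
    · exact hdisj0 k l h
    · have hne : (k : ℕ) ≠ (l : ℕ) := fun he => hkl (Fin.ext he)
      exact (hdisj0 l k (by omega)).symm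
  have hsub : (⋃ k, f k) ⊆ S := by
    rintro x hx
    obtain ⟨k, hk⟩ := Set.mem_iUnion.1 hx
    exact hbox k k.isLt x (hk.1 : _ ∈ C)
  have hvol : ∀ k, volume (f k) = volume T := fun k =>
    measure_preimage_add_right volume _ T
  calc (N : ℝ≥0∞) * volume T = ∑ k : Fin N, volume (f k) := by
        simp [hvol, Finset.card_univ]
    _ = volume (⋃ k, f k) := by
        rw [measure_iUnion hdisj hfmeas, tsum_fintype]
    _ ≤ volume S := measure_mono hsub

end helpers

/-- The uniform grid `G(m) = {(i₁,…,i_d)/m : 0 ≤ iⱼ ≤ m}` in `[0,1]^d`. -/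
def grid (d m : ℕ) : Set (EuclideanSpace ℝ (Fin d)) :=
  {x | ∀ j : Fin d, ∃ i : ℕ, i ≤ m ∧ x j = (i : ℝ) / m}

lemma mem_hull' (d m : ℕ) (hd : 0 < d) (hm : 0 < m)
    (C : Set (EuclideanSpace ℝ (Fin d))) (hC : Convex ℝ C)
    (hCu : C ⊆ {x | ∀ j : Fin d, x j ∈ Set.Icc (0 : ℝ) 1})
    (x : EuclideanSpace ℝ (Fin d)) (hx : x ∈ C)
    (hgood : ∀ j : Fin d, x + EuclideanSpace.single j ((d : ℝ)/m) ∈ C ∧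
      x - EuclideanSpace.single j ((d : ℝ)/m) ∈ C) :
    x ∈ convexHull ℝ (C ∩ grid d m) := by
  have hmR : (0 : ℝ) < m := by exact_mod_cast hm
  have hdR : (0 : ℝ) < d := by exact_mod_cast hd
  set δ : ℝ := (d : ℝ)/m with hδ
  have hδpos : 0 < δ := by positivity
  -- Step 1: segments in coordinate directions
  have hseg : ∀ (j : Fin d) (s : ℝ), |s| ≤ δ → x + EuclideanSpace.single j s ∈ C := by
    intro j s hs
    rw [abs_le] at hs
    set a : ℝ := (δ + s)/(2*δ) with ha
    set b : ℝ := (δ - s)/(2*δ) with hb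
    have hab : a + b = 1 := by rw [ha, hb]; field_simp; ring
    have habs : a*δ - b*δ = s := by rw [ha, hb]; field_simp; ring
    have hcomb := hC (hgood j).1 (hgood j).2 (a := a) (b := b)
      (by rw [ha]; apply div_nonneg <;> linarith) (by rw [hb]; apply div_nonneg <;> linarith)
      hab
    have heq : a • (x + EuclideanSpace.single j δ) + b • (x - EuclideanSpace.single j δ)
        = x + EuclideanSpace.single j s := by
      ext i
      simp only [PiLp.add_apply, PiLp.sub_apply, PiLp.smul_apply, smul_eq_mul,
        EuclideanSpace.single_apply]
      split_ifs with h
      · linear_combination (x i) * hab + habs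
      · linear_combination (x i) * hab
    rwa [heq] at hcomb
  -- Step 2: full cube around x
  have hcube : ∀ u : EuclideanSpace ℝ (Fin d), (∀ j, |u j| ≤ 1/m) → x + u ∈ C := by
    intro u hu
    have hpts : ∀ j : Fin d, x + EuclideanSpace.single j ((d : ℝ) * u j) ∈ C := by
      intro j
      apply hseg
      rw [abs_mul, abs_of_nonneg hdR.le, hδ]
      calc (d : ℝ) * |u j| ≤ (d : ℝ) * (1/m) := mul_le_mul_of_nonneg_left (hu j) hdR.le
        _ = (d : ℝ)/m := by ring
    have heq : x + u = ∑ j : Fin d, ((d : ℝ)⁻¹) • (x + EuclideanSpace.single j ((d : ℝ) * u j)) := by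
      ext i
      rw [WithLp.ofLp_sum, Finset.sum_apply]
      have hterm : ∀ j : Fin d, (((d : ℝ)⁻¹) • (x + EuclideanSpace.single j ((d : ℝ) * u j))) i
          = (d:ℝ)⁻¹ * x i + (if i = j then u i else 0) := by
        intro j
        simp only [PiLp.smul_apply, PiLp.add_apply, EuclideanSpace.single_apply, smul_eq_mul]
        split_ifs with h
        · subst h; field_simp
        · ring
      rw [Finset.sum_congr rfl (fun j _ => hterm j), Finset.sum_add_distrib]
      simp only [Finset.sum_const, Finset.card_univ, Fintype.card_fin, nsmul_eq_mul,
        Finset.sum_ite_eq, Finset.mem_univ, if_true, PiLp.add_apply]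
      field_simp
    rw [heq]
    exact hC.sum_mem (fun j _ => by positivity)
      (by simp [Finset.card_univ]; field_simp) (fun j _ => hpts j)
  -- Step 3: the grid cell containing x
  set n : Fin d → ℕ := fun j => min (⌊(m : ℝ) * x j⌋.toNat) (m - 1) with hn
  have hx01 : ∀ j, x j ∈ Set.Icc (0:ℝ) 1 := hCu hx
  have hnm : ∀ j, n j + 1 ≤ m := fun j => by
    have h1 : n j ≤ m - 1 := min_le_right _ _
    omega
  have hfl : ∀ j, (0:ℤ) ≤ ⌊(m : ℝ) * x j⌋ :=
    fun j => Int.floor_nonneg.2 (mul_nonneg hmR.le (hx01 j).1)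
  have htn : ∀ j, ((⌊(m : ℝ) * x j⌋.toNat : ℕ) : ℝ) = ((⌊(m : ℝ) * x j⌋ : ℤ) : ℝ) := by
    intro j
    exact_mod_cast congrArg (fun z : ℤ => (z : ℝ)) (Int.toNat_of_nonneg (hfl j))
  have hlo : ∀ j, (n j : ℝ)/m ≤ x j := by
    intro j
    rw [div_le_iff₀ hmR]
    have h1 : (n j : ℕ) ≤ ⌊(m : ℝ) * x j⌋.toNat := Nat.min_le_left _ _
    have h2 : ((⌊(m : ℝ) * x j⌋.toNat : ℕ) : ℝ) ≤ (m:ℝ) * x j := by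
      rw [htn j]; exact Int.floor_le _
    have h3 : ((n j : ℕ) : ℝ) ≤ ((⌊(m : ℝ) * x j⌋.toNat : ℕ) : ℝ) := by exact_mod_cast h1
    linarith [mul_comm (x j) (m : ℝ)]
  have hhi : ∀ j, x j ≤ ((n j : ℝ)+1)/m := by
    intro j
    rw [le_div_iff₀ hmR]
    rcases le_or_gt (⌊(m : ℝ) * x j⌋.toNat) (m-1) with h | h
    · have hnj : n j = ⌊(m : ℝ) * x j⌋.toNat := min_eq_left h
      have h2 : (m:ℝ) * x j < (⌊(m : ℝ) * x j⌋ : ℝ) + 1 := Int.lt_floor_add_one _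
      rw [hnj, htn j]
      linarith [mul_comm (x j) (m : ℝ)]
    · have hnj : n j = m - 1 := min_eq_right h.le
      have h1 : x j ≤ 1 := (hx01 j).2
      have h2 : ((m - 1 : ℕ) : ℝ) = (m : ℝ) - 1 := by
        have : (1:ℕ) ≤ m := hm
        push_cast [Nat.cast_sub this]; ring
      rw [hnj, h2]
      nlinarith
  -- the cell vertices
  set t : Fin d → Set ℝ := fun j => {(n j : ℝ)/m, ((n j : ℝ)+1)/m} with ht
  set V : Set (EuclideanSpace ℝ (Fin d)) := WithLp.ofLp ⁻¹' Set.univ.pi t with hV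
  have hx_in : x ∈ convexHull ℝ V := by
    have h0 : WithLp.ofLp x ∈ convexHull ℝ (Set.univ.pi t) := by
      apply mem_convexHull_pi (𝕜 := ℝ) (E := fun _ : Fin d => ℝ) (x := WithLp.ofLp x) (s := Set.univ) (t := t)
      intro j _
      rw [ht]
      rw [convexHull_pair, segment_eq_Icc (by rw [div_le_div_iff₀ hmR hmR]; nlinarith [hmR])]
      exact ⟨hlo j, hhi j⟩
    have h1 := (WithLp.linearEquiv 2 ℝ (Fin d → ℝ)).symm.toLinearMap.image_convexHull (Set.univ.pi t)
    have h2 : x ∈ (WithLp.linearEquiv 2 ℝ (Fin d → ℝ)).symm.toLinearMap '' convexHull ℝ (Set.univ.pi t) :=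
      ⟨_, h0, rfl⟩
    rw [h1] at h2
    convert h2 using 2
    ext y
    exact ⟨fun hy => ⟨WithLp.ofLp y, hy, rfl⟩, fun ⟨z, hz, hzy⟩ => by subst hzy; exact hz⟩
  have hsub : V ⊆ C ∩ grid d m := by
    intro y hy
    have hyj : ∀ j, y j = (n j : ℝ)/m ∨ y j = ((n j : ℝ)+1)/m := by
      intro j
      have := hy j (Set.mem_univ j)
      simpa [ht] using this
    constructor
    · have hxy : x + (y - x) = y := by abel
      rw [← hxy]
      apply hcube
      intro j
      have hd1 : ((n j : ℝ)+1)/m = (n j : ℝ)/m + 1/m := by field_simp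
      have hsub : (y - x) j = y j - x j := rfl
      rw [hsub, abs_le]
      rcases hyj j with h | h <;> rw [h] <;>
        constructor <;> linarith [hlo j, hhi j, hd1]
    · intro j
      rcases hyj j with h | h
      · exact ⟨n j, by have := hnm j; omega, by rw [h]⟩
      · exact ⟨n j + 1, hnm j, by rw [h]; push_cast; ring⟩
  exact convexHull_mono hsub hx_in

/-- If `C ⊆ [0,1]^d` is a convex body and `D = conv(C ∩ G(m))` is its discrete
hull, then `vol C − vol D ≤ 4d²/m`. -/
theorem discrete_hull_volume (d m : ℕ) (hd : 0 < d) (hm : 0 < m)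
    (C : Set (EuclideanSpace ℝ (Fin d)))
    (hC : Convex ℝ C) (hCc : IsCompact C)
    (hCu : C ⊆ {x | ∀ j : Fin d, x j ∈ Set.Icc (0 : ℝ) 1}) :
    (volume C).toReal - (volume (convexHull ℝ (C ∩ grid d m))).toReal ≤
      4 * (d : ℝ) ^ 2 / m := by
  have hmR : (0 : ℝ) < m := by exact_mod_cast hm
  have hdR : (0 : ℝ) < d := by exact_mod_cast hd
  set δ : ℝ := (d : ℝ)/m with hδ
  have hδpos : 0 < δ := by positivity
  set D : Set (EuclideanSpace ℝ (Fin d)) := convexHull ℝ (C ∩ grid d m) with hD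
  have hmeas : MeasurableSet C := hCc.isClosed.measurableSet
  set Bp : Fin d → Set (EuclideanSpace ℝ (Fin d)) :=
    fun j => C \ {x | x + EuclideanSpace.single j δ ∈ C} with hBp
  set Bm : Fin d → Set (EuclideanSpace ℝ (Fin d)) :=
    fun j => C \ {x | x + (-EuclideanSpace.single j δ) ∈ C} with hBm
  -- covering
  have hcover : C ⊆ D ∪ ⋃ j, (Bp j ∪ Bm j) := by
    intro x hx
    by_cases hg : ∀ j : Fin d, x + EuclideanSpace.single j δ ∈ C ∧
        x - EuclideanSpace.single j δ ∈ C
    · exact Or.inl (mem_hull' d m hd hm C hC hCu x hx hg)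
    · right
      push_neg at hg
      obtain ⟨j, hj⟩ := hg
      refine Set.mem_iUnion.2 ⟨j, ?_⟩
      by_cases h1 : x + EuclideanSpace.single j δ ∈ C
      · have h2 : x - EuclideanSpace.single j δ ∉ C := hj h1
        right
        exact ⟨hx, by rwa [Set.mem_setOf_eq, ← sub_eq_add_neg]⟩
      · left
        exact ⟨hx, h1⟩
  -- volume of each bad slab
  have hBpvol : ∀ j, (m : ℝ≥0∞) * volume (Bp j) ≤ ENNReal.ofReal (2 * d) := by
    intro j
    have := key_count' d m C hC hmeas (EuclideanSpace.single j δ)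
      {x : EuclideanSpace ℝ (Fin d) | ∀ i,
        x i ∈ Icc ((if i = j then -(((m : ℝ) - 1) * δ) else 0)) 1}
      (by
        intro k hk x hxk i
        have hcoord := hCu hxk i
        have hxki : (x + (k : ℝ) • EuclideanSpace.single j δ) i
            = x i + (k : ℝ) * (if i = j then δ else 0) := by
          simp [EuclideanSpace.single_apply]
        rw [hxki, Set.mem_Icc] at hcoord
        have hkR : (k : ℝ) + 1 ≤ (m : ℝ) := by exact_mod_cast hk
        have hknn : (0:ℝ) ≤ (k : ℝ) := Nat.cast_nonneg k
        rw [Set.mem_Icc]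
        split_ifs at hcoord ⊢ with h
        · constructor
          · nlinarith [hcoord.1, hδpos]
          · nlinarith [hcoord.2, hδpos, mul_nonneg hknn hδpos.le]
        · rw [mul_zero, add_zero] at hcoord
          exact hcoord)
    refine this.trans ?_
    rw [slab_vol']
    have hterm : ∀ i : Fin d, ENNReal.ofReal ((1 : ℝ) - (if i = j then -(((m : ℝ) - 1) * δ) else 0))
        = if i = j then ENNReal.ofReal (1 + ((m : ℝ) - 1) * δ) else 1 := by
      intro i
      split_ifs with h <;> simp [sub_neg_eq_add]
    rw [Finset.prod_congr rfl (fun i _ => hterm i)]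
    rw [Finset.prod_ite_eq' Finset.univ j (fun _ => ENNReal.ofReal (1 + ((m : ℝ) - 1) * δ))]
    simp only [Finset.mem_univ, if_true]
    apply ENNReal.ofReal_le_ofReal
    have h1 : ((m : ℝ) - 1) * δ ≤ (m : ℝ) * δ := by nlinarith
    have h2 : (m : ℝ) * δ = d := by rw [hδ]; field_simp
    have hd1 : (1:ℝ) ≤ d := by exact_mod_cast hd
    linarith
  have hBmvol : ∀ j, (m : ℝ≥0∞) * volume (Bm j) ≤ ENNReal.ofReal (2 * d) := by
    intro j
    have := key_count' d m C hC hmeas (-EuclideanSpace.single j δ)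
      {x : EuclideanSpace ℝ (Fin d) | ∀ i,
        x i ∈ Icc (0 : ℝ) (if i = j then 1 + ((m : ℝ) - 1) * δ else 1)}
      (by
        intro k hk x hxk i
        have hcoord := hCu hxk i
        have hxki : (x + (k : ℝ) • (-EuclideanSpace.single j δ)) i
            = x i - (k : ℝ) * (if i = j then δ else 0) := by
          simp [EuclideanSpace.single_apply]; ring
        rw [hxki, Set.mem_Icc] at hcoord
        have hkR : (k : ℝ) + 1 ≤ (m : ℝ) := by exact_mod_cast hk
        have hknn : (0:ℝ) ≤ (k : ℝ) := Nat.cast_nonneg k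
        rw [Set.mem_Icc]
        split_ifs at hcoord ⊢ with h
        · constructor
          · nlinarith [hcoord.1, hδpos, mul_nonneg hknn hδpos.le]
          · nlinarith [hcoord.2, hδpos]
        · rw [mul_zero, sub_zero] at hcoord
          exact hcoord)
    refine this.trans ?_
    rw [slab_vol']
    have hterm : ∀ i : Fin d, ENNReal.ofReal ((if i = j then 1 + ((m : ℝ) - 1) * δ else 1) - 0)
        = if i = j then ENNReal.ofReal (1 + ((m : ℝ) - 1) * δ) else 1 := by
      intro i
      split_ifs with h <;> simp
    rw [Finset.prod_congr rfl (fun i _ => hterm i)]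
    rw [Finset.prod_ite_eq' Finset.univ j (fun _ => ENNReal.ofReal (1 + ((m : ℝ) - 1) * δ))]
    simp only [Finset.mem_univ, if_true]
    apply ENNReal.ofReal_le_ofReal
    have h1 : ((m : ℝ) - 1) * δ ≤ (m : ℝ) * δ := by nlinarith
    have h2 : (m : ℝ) * δ = d := by rw [hδ]; field_simp
    have hd1 : (1:ℝ) ≤ d := by exact_mod_cast hd
    linarith
  -- total bad volume
  have hmne : (m : ℝ≥0∞) ≠ 0 := by exact_mod_cast Nat.pos_iff_ne_zero.1 hm
  have hmnetop : (m : ℝ≥0∞) ≠ ⊤ := ENNReal.natCast_ne_top m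
  have hbad : volume (⋃ j, (Bp j ∪ Bm j)) ≤ ENNReal.ofReal (4 * (d : ℝ)^2 / m) := by
    have hle : ∀ j, volume (Bp j ∪ Bm j) ≤ 2 * (ENNReal.ofReal (2 * d) / m) := by
      intro j
      have h1 : volume (Bp j) ≤ ENNReal.ofReal (2 * d) / m := by
        rw [ENNReal.le_div_iff_mul_le (Or.inl hmne) (Or.inl hmnetop), mul_comm]
        exact hBpvol j
      have h2 : volume (Bm j) ≤ ENNReal.ofReal (2 * d) / m := by
        rw [ENNReal.le_div_iff_mul_le (Or.inl hmne) (Or.inl hmnetop), mul_comm]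
        exact hBmvol j
      calc volume (Bp j ∪ Bm j) ≤ volume (Bp j) + volume (Bm j) := measure_union_le _ _
        _ ≤ ENNReal.ofReal (2 * d) / m + ENNReal.ofReal (2 * d) / m := add_le_add h1 h2
        _ = 2 * (ENNReal.ofReal (2 * d) / m) := by ring
    calc volume (⋃ j, (Bp j ∪ Bm j)) ≤ ∑' j, volume (Bp j ∪ Bm j) := measure_iUnion_le _
      _ = ∑ j : Fin d, volume (Bp j ∪ Bm j) := tsum_fintype _
      _ ≤ ∑ j : Fin d, 2 * (ENNReal.ofReal (2 * d) / m) :=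
          Finset.sum_le_sum (fun j _ => hle j)
      _ = (d : ℝ≥0∞) * (2 * (ENNReal.ofReal (2 * d) / m)) := by
          rw [Finset.sum_const, Finset.card_univ, Fintype.card_fin, nsmul_eq_mul]
      _ = ((d : ℝ≥0∞) * 2 * ENNReal.ofReal (2 * d)) / m := by
          rw [← mul_assoc, mul_div_assoc]
      _ = ENNReal.ofReal (4 * (d : ℝ)^2) / m := by
          congr 1
          rw [← ENNReal.ofReal_natCast d, ← ENNReal.ofReal_ofNat 2,
            ← ENNReal.ofReal_mul (by positivity), ← ENNReal.ofReal_mul (by positivity)]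
          congr 1
          ring
      _ = ENNReal.ofReal (4 * (d : ℝ)^2 / m) := by
          rw [ENNReal.ofReal_div_of_pos hmR, ENNReal.ofReal_natCast]
  -- finiteness
  have hCub : volume C ≤ 1 := by
    have h1 : volume C ≤ volume {x : EuclideanSpace ℝ (Fin d) | ∀ i,
        x i ∈ Icc ((fun _ => (0:ℝ)) i) ((fun _ => (1:ℝ)) i)} := measure_mono hCu
    rw [slab_vol'] at h1
    simpa using h1
  have hCfin : volume C ≠ ⊤ := by
    exact ne_top_of_le_ne_top ENNReal.one_ne_top hCub
  have hDC : D ⊆ C := convexHull_min Set.inter_subset_left hC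
  have hDfin : volume D ≠ ⊤ := ne_top_of_le_ne_top hCfin (measure_mono hDC)
  -- conclusion
  have hmain : volume C ≤ volume D + ENNReal.ofReal (4 * (d : ℝ)^2 / m) :=
    calc volume C ≤ volume (D ∪ ⋃ j, (Bp j ∪ Bm j)) := measure_mono hcover
      _ ≤ volume D + volume (⋃ j, (Bp j ∪ Bm j)) := measure_union_le _ _
      _ ≤ volume D + ENNReal.ofReal (4 * (d : ℝ)^2 / m) := add_le_add_right hbad _
  have htr := ENNReal.toReal_mono (by
      exact ENNReal.add_ne_top.2 ⟨hDfin, ENNReal.ofReal_ne_top⟩) hmain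
  rw [ENNReal.toReal_add hDfin ENNReal.ofReal_ne_top,
    ENNReal.toReal_ofReal (by positivity)] at htr
  linarith
end

section
/- Let C ⊆ [0,1]^d be a convex body, m a positive integer, and p ∈ C a point such that the 2d points p ± (2d/m)·eᵢ (i = 1,...,d) all lie in C, where eᵢ are the standard basis vectors. Then p lies in the convex hull of C ∩ G(m), where G(m) is the uniform grid of side 1/m in [0,1]^d. -/
/-- If `C ⊆ [0,1]^d` is a convex body, `p ∈ C`, and the `2d` points
`p ± (2d/m)eᵢ` all lie in `C`, then `p ∈ conv(C ∩ G(m))`. -/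
theorem deep_point_in_discrete_hull (d m : ℕ) (hd : 0 < d) (hm : 0 < m)
    (C : Set (EuclideanSpace ℝ (Fin d))) (hC : Convex ℝ C)
    (hCu : C ⊆ {x | ∀ j : Fin d, x j ∈ Set.Icc (0 : ℝ) 1})
    (p : EuclideanSpace ℝ (Fin d)) (hp : p ∈ C)
    (hdeep : ∀ i : Fin d,
      p + (2 * (d : ℝ) / m) • EuclideanSpace.single i (1 : ℝ) ∈ C ∧
      p - (2 * (d : ℝ) / m) • EuclideanSpace.single i (1 : ℝ) ∈ C) :
    p ∈ convexHull ℝ (C ∩ grid d m) := by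
  have hm' : (0:ℝ) < m := by exact_mod_cast hm
  have hd' : (0:ℝ) < d := by exact_mod_cast hd
  have hp01 : ∀ j, p j ∈ Set.Icc (0:ℝ) 1 := hCu hp
  set n : Fin d → ℕ := fun j => min (⌊(m:ℝ) * p j⌋.toNat) (m-1) with hn
  have hfl0 : ∀ j, 0 ≤ ⌊(m:ℝ) * p j⌋ := fun j =>
    Int.le_floor.2 (by exact_mod_cast mul_nonneg hm'.le (hp01 j).1)
  have hn_le : ∀ j, n j + 1 ≤ m := fun j => by
    have : n j ≤ m - 1 := min_le_right _ _
    omega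
  have hlow : ∀ j, (n j : ℝ)/m ≤ p j := by
    intro j
    rw [div_le_iff₀ hm']
    have h1 : ((n j : ℕ) : ℝ) ≤ ((⌊(m:ℝ) * p j⌋.toNat : ℕ) : ℝ) := by
      exact_mod_cast min_le_left _ _
    have h2 : ((⌊(m:ℝ) * p j⌋.toNat : ℤ) : ℝ) ≤ (m:ℝ) * p j := by
      rw [Int.toNat_of_nonneg (hfl0 j)]; exact Int.floor_le _
    push_cast at h2
    nlinarith
  have hhigh : ∀ j, p j ≤ ((n j : ℝ)+1)/m := by
    intro j
    rw [le_div_iff₀ hm']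
    by_cases hc : ⌊(m:ℝ) * p j⌋.toNat ≤ m - 1
    · have hnj : n j = ⌊(m:ℝ) * p j⌋.toNat := min_eq_left hc
      have h2 : (m:ℝ) * p j < ((⌊(m:ℝ) * p j⌋.toNat : ℤ) : ℝ) + 1 := by
        rw [Int.toNat_of_nonneg (hfl0 j)]; exact Int.lt_floor_add_one _
      rw [hnj]
      push_cast at h2 ⊢
      nlinarith
    · have hnj : n j = m - 1 := min_eq_right (le_of_not_ge hc)
      have h3 : p j * m ≤ 1 * m := mul_le_mul_of_nonneg_right (hp01 j).2 hm'.le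
      rw [hnj]
      have hm1 : ((m - 1 : ℕ) : ℝ) + 1 = (m : ℝ) := by
        have h1 : (1:ℕ) ≤ m := hm
        push_cast [Nat.cast_sub h1]
        ring
      rw [hm1]; linarith
  set t : Fin d → Set ℝ := fun j => {(n j : ℝ)/m, ((n j:ℝ)+1)/m} with ht
  -- every vertex of the cell lies in C ∩ grid
  have hvert : ∀ v : EuclideanSpace ℝ (Fin d), (∀ j, v j ∈ t j) → v ∈ C ∩ grid d m := by
    intro v hv
    have hv' : ∀ j, v j = (n j:ℝ)/m ∨ v j = ((n j:ℝ)+1)/m := by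
      intro j
      simpa [ht, Set.mem_insert_iff] using hv j
    have hwb : ∀ j, |v j - p j| ≤ 1/m := by
      intro j
      have h1 := hlow j; have h2 := hhigh j
      have he : ((n j:ℝ)+1)/m = (n j:ℝ)/m + 1/m := by ring
      have h1m : (0:ℝ) < 1/m := by positivity
      rcases hv' j with h | h <;> rw [abs_le] <;> constructor <;>
        simp only [h, he] at * <;> linarith
    constructor
    · -- v ∈ C via convex combination
      set w : Fin d → ℝ := fun j => v j - p j with hw
      set c : Fin d → ℝ := fun j => if 0 ≤ w j then 1 else -1 with hcdef
      set μ : Fin d → ℝ := fun j => |w j| * m / (2*d) with hμ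
      have hμ0 : ∀ j, 0 ≤ μ j := fun j => by
        have := abs_nonneg (w j); positivity
      have hμle : ∀ j, μ j ≤ 1/(2*d) := by
        intro j
        have h1 : |w j| ≤ 1/m := hwb j
        have h2 : |w j| * m ≤ 1 := by
          have := mul_le_mul_of_nonneg_right h1 hm'.le
          rwa [one_div, inv_mul_cancel₀ hm'.ne'] at this
        show |w j| * m / (2*d) ≤ 1/(2*d)
        gcongr
      have hμsum : ∑ j, μ j ≤ 1/2 := by
        calc ∑ j, μ j ≤ ∑ _j : Fin d, (1/(2*(d:ℝ))) := Finset.sum_le_sum fun j _ => hμle j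
          _ = d * (1/(2*(d:ℝ))) := by
              rw [Finset.sum_const, Finset.card_univ, Fintype.card_fin, nsmul_eq_mul]
          _ = 1/2 := by field_simp
      set Z : Option (Fin d) → EuclideanSpace ℝ (Fin d) := fun o =>
        o.elim p (fun j => p + ((2 * (d : ℝ) / m) * c j) • EuclideanSpace.single j (1:ℝ))
        with hZ
      set W : Option (Fin d) → ℝ := fun o => o.elim (1 - ∑ j, μ j) μ with hWdef
      have hWnn : ∀ i ∈ (Finset.univ : Finset (Option (Fin d))), 0 ≤ W i := by
        rintro (_ | j) -
        · show (0:ℝ) ≤ 1 - ∑ j, μ j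
          linarith
        · exact hμ0 j
      have hWsum : ∑ i : Option (Fin d), W i = 1 := by
        rw [Fintype.sum_option]
        show (1 - ∑ j, μ j) + ∑ j, μ j = 1
        ring
      have hZC : ∀ i ∈ (Finset.univ : Finset (Option (Fin d))), Z i ∈ C := by
        rintro (_ | j) -
        · exact hp
        · show p + ((2 * (d : ℝ) / m) * c j) • EuclideanSpace.single j (1:ℝ) ∈ C
          by_cases hj : 0 ≤ w j
          · have hc1 : c j = 1 := if_pos hj
            rw [hc1, mul_one]; exact (hdeep j).1
          · have hc1 : c j = -1 := if_neg hj
            rw [hc1, mul_neg_one, neg_smul, ← sub_eq_add_neg]; exact (hdeep j).2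
      have hkey : ∑ i : Option (Fin d), W i • Z i = v := by
        ext k
        have happly : (∑ i : Option (Fin d), W i • Z i) k
            = ∑ i : Option (Fin d), W i * Z i k := by
          simpa [smul_eq_mul] using
            (map_sum (EuclideanSpace.proj (𝕜 := ℝ) k) (fun i => W i • Z i) Finset.univ)
        rw [happly, Fintype.sum_option]
        show (1 - ∑ j, μ j) * p k + ∑ j, μ j * Z (some j) k = v k
        have hZk : ∀ j, Z (some j) k
            = p k + (2 * (d:ℝ) / m * c j) * (if k = j then 1 else 0) := by
          intro j
          show (p + ((2 * (d : ℝ) / m) * c j) • EuclideanSpace.single j (1:ℝ)) k = _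
          simp [EuclideanSpace.single_apply]
        simp only [hZk, mul_add]
        rw [Finset.sum_add_distrib, ← Finset.sum_mul]
        have hsum2 : ∑ j, μ j * (2 * (d:ℝ) / m * c j * (if k = j then 1 else 0))
            = μ k * (2 * (d:ℝ) / m * c k) := by
          rw [Finset.sum_eq_single k]
          · simp
          · intro b _ hb; simp [Ne.symm hb]
          · intro h; exact absurd (Finset.mem_univ k) h
        have habs : |w k| * c k = w k := by
          by_cases h0 : 0 ≤ w k
          · have : c k = 1 := if_pos h0
            rw [this, mul_one, abs_of_nonneg h0]
          · have : c k = -1 := if_neg h0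
            rw [this, abs_of_neg (lt_of_not_ge h0)]; ring
        have hwk : μ k * (2 * (d:ℝ) / m * c k) = v k - p k := by
          have h1 : μ k * (2 * (d:ℝ) / m * c k) = |w k| * c k := by
            show (|w k| * m / (2*d)) * (2 * (d:ℝ) / m * c k) = |w k| * c k
            field_simp
          rw [h1, habs]
        rw [hsum2, hwk]
        ring
      rw [← hkey]
      exact hC.sum_mem hWnn hWsum hZC
    · -- grid membership
      intro j
      rcases hv' j with h | h
      · exact ⟨n j, by have := hn_le j; omega, h⟩
      · refine ⟨n j + 1, hn_le j, ?_⟩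
        rw [h]; push_cast; ring
  -- p lies in the hull of the cell vertices
  have hB : p.ofLp ∈ convexHull ℝ ((Set.univ).pi t : Set (Fin d → ℝ)) := by
    apply mem_convexHull_pi
    intro i _
    have hconv : convexHull ℝ (t i) = Set.Icc ((n i : ℝ)/m) (((n i:ℝ)+1)/m) := by
      show convexHull ℝ {(n i : ℝ)/m, ((n i:ℝ)+1)/m} = _
      rw [convexHull_pair]
      exact segment_eq_Icc (by have := hlow i; have := hhigh i; linarith)
    rw [hconv]
    exact ⟨hlow i, hhigh i⟩
  have hsub : ((Set.univ).pi t : Set (Fin d → ℝ))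
      ⊆ WithLp.ofLp '' (C ∩ grid d m : Set (EuclideanSpace ℝ (Fin d))) := by
    intro v hv
    exact ⟨WithLp.toLp 2 v, hvert (WithLp.toLp 2 v) (fun j => hv j (Set.mem_univ j)), rfl⟩
  have himg : p.ofLp ∈ (WithLp.linearEquiv 2 ℝ (Fin d → ℝ)).toLinearMap ''
      convexHull ℝ (C ∩ grid d m) := by
    rw [LinearMap.image_convexHull]
    exact convexHull_mono hsub hB
  obtain ⟨q, hq, hqp⟩ := himg
  have hqp' : q = p := by
    ext j
    exact congrFun hqp j
  rw [← hqp']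
  exact hq
end

section
/- For every set S of n points in the unit square [0,1]², there exists a convex body C ⊆ [0,1]² whose interior contains no point of S and whose area is at least 2/(n+4). -/
open MeasureTheory
open scoped Classical

noncomputable section
namespace EmptyConvex

abbrev E2 := EuclideanSpace ℝ (Fin 2)
def unitSq : Set E2 := {x | ∀ j : Fin 2, x j ∈ Set.Icc (0 : ℝ) 1}
def lin (a b : ℝ) : E2 →ₗ[ℝ] ℝ where
  toFun x := a * x 0 + b * x 1
  map_add' x y := by simp [PiLp.add_apply]; ring
  map_smul' c x := by simp [PiLp.smul_apply, smul_eq_mul]; ring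
lemma lin_cont (a b : ℝ) : Continuous fun x : E2 => a * x 0 + b * x 1 :=
  (lin a b).continuous_of_finiteDimensional
def halfLe (a b c : ℝ) : Set E2 := {x | a * x 0 + b * x 1 ≤ c}
lemma convex_halfLe (a b c : ℝ) : Convex ℝ (halfLe a b c) :=
  convex_halfSpace_le (lin a b).isLinear c
lemma closed_halfLe (a b c : ℝ) : IsClosed (halfLe a b c) :=
  isClosed_le (lin_cont a b) continuous_const
def vec (a b : ℝ) : E2 := (WithLp.equiv 2 (Fin 2 → ℝ)).symm ![a, b]
lemma vec0 (a b : ℝ) : vec a b 0 = a := rfl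
lemma vec1 (a b : ℝ) : vec a b 1 = b := rfl
lemma pt_ext {x y : E2} (h0 : x 0 = y 0) (h1 : x 1 = y 1) : x = y := by
  apply PiLp.ext; intro j; fin_cases j <;> assumption

lemma interior_subset_lt {a b c : ℝ} (hab : ¬(a = 0 ∧ b = 0)) {D : Set E2}
    (hD : D ⊆ halfLe a b c) {x : E2} (hx : x ∈ interior D) :
    a * x 0 + b * x 1 < c := by
  have hxD : x ∈ D := interior_subset hx
  have hle : a * x 0 + b * x 1 ≤ c := hD hxD
  rcases lt_or_eq_of_le hle with h | h
  · exact h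
  exfalso
  obtain ⟨ε, hε, hball⟩ := Metric.isOpen_iff.1 isOpen_interior x hx
  have hv0 : vec a b ≠ 0 := by
    intro h0
    apply hab
    constructor
    · have := congrArg (fun w : E2 => w 0) h0; simpa [vec0] using this
    · have := congrArg (fun w : E2 => w 1) h0; simpa [vec1] using this
  have hnv : 0 < ‖vec a b‖ := norm_pos_iff.2 hv0
  set t : ℝ := ε / (2 * ‖vec a b‖) with ht
  have htpos : 0 < t := by positivity
  set y : E2 := x + t • vec a b with hy
  have hyball : y ∈ Metric.ball x ε := by
    rw [Metric.mem_ball, dist_eq_norm]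
    have : y - x = t • vec a b := by rw [hy]; abel
    rw [this, norm_smul, Real.norm_eq_abs, abs_of_pos htpos]
    rw [ht, mul_comm]
    have heq : ‖vec a b‖ * (ε / (2 * ‖vec a b‖)) = ε / 2 := by
      field_simp
    rw [heq]; linarith
  have hyD : y ∈ D := interior_subset (hball hyball)
  have hyle : a * y 0 + b * y 1 ≤ c := hD hyD
  have hy0 : y 0 = x 0 + t * a := by
    rw [hy]; simp [PiLp.add_apply, PiLp.smul_apply, vec0, smul_eq_mul]
  have hy1 : y 1 = x 1 + t * b := by
    rw [hy]; simp [PiLp.add_apply, PiLp.smul_apply, vec1, smul_eq_mul]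
  rw [hy0, hy1] at hyle
  have habs : 0 < a ^ 2 + b ^ 2 := by
    rcases not_and_or.1 hab with h' | h'
    · positivity
    · positivity
  nlinarith [hyle, h, htpos, habs]

lemma volume_cut (R : Set E2) (a b c : ℝ) :
    volume R ≤ volume (R ∩ halfLe a b c) + volume (R ∩ halfLe (-a) (-b) (-c)) := by
  calc volume R ≤ volume ((R ∩ halfLe a b c) ∪ (R ∩ halfLe (-a) (-b) (-c))) := by
        apply measure_mono
        intro x hx
        rcases le_total (a * x 0 + b * x 1) c with h | h
        · exact Or.inl ⟨hx, h⟩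
        · exact Or.inr ⟨hx, show -a * x 0 + -b * x 1 ≤ -c by linarith⟩
    _ ≤ _ := measure_union_le _ _

lemma cut_piece (R : Set E2) (S : Finset E2) (hconv : Convex ℝ R) (hcomp : IsCompact R)
    (a b c : ℝ) (hab : ¬(a = 0 ∧ b = 0))
    (hside : ∀ p ∈ S, p ∈ interior R → c ≤ a * p 0 + b * p 1) :
    Convex ℝ (R ∩ halfLe a b c) ∧ IsCompact (R ∩ halfLe a b c) ∧ (R ∩ halfLe a b c) ⊆ R ∧
      ∀ p ∈ S, p ∉ interior (R ∩ halfLe a b c) := by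
  refine ⟨hconv.inter (convex_halfLe a b c), hcomp.inter_right (closed_halfLe a b c),
    Set.inter_subset_left, ?_⟩
  intro p hpS hpint
  have h1 : p ∈ interior R := interior_mono Set.inter_subset_left hpint
  have h2 : a * p 0 + b * p 1 < c := interior_subset_lt hab Set.inter_subset_right hpint
  exact absurd (hside p hpS h1) (not_le.2 h2)


def projj (j : Fin 2) : E2 →ₗ[ℝ] ℝ where
  toFun x := x j
  map_add' x y := by simp [PiLp.add_apply]
  map_smul' c x := by simp [PiLp.smul_apply]

lemma convex_unitSq : Convex ℝ unitSq := by
  intro x hx y hy s t hs ht hst j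
  have hxj := hx j
  have hyj := hy j
  simp only [Set.mem_Icc] at hxj hyj ⊢
  have hap : (s • x + t • y) j = s * x j + t * y j := by
    simp [PiLp.add_apply, PiLp.smul_apply, smul_eq_mul]
  rw [hap]
  constructor
  · nlinarith [hxj.1, hyj.1]
  · nlinarith [hxj.2, hyj.2]

lemma isCompact_unitSq : IsCompact unitSq := by
  apply Metric.isCompact_of_isClosed_isBounded
  · have h : unitSq = ⋂ j : Fin 2, (fun x : E2 => x j) ⁻¹' Set.Icc (0:ℝ) 1 := by
      ext x; simp [unitSq, Set.mem_iInter]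
    rw [h]
    exact isClosed_iInter fun j =>
      IsClosed.preimage ((projj j).continuous_of_finiteDimensional) isClosed_Icc
  · refine (Metric.isBounded_closedBall (x := (0 : E2)) (r := 2)).subset ?_
    intro x hx
    rw [Metric.mem_closedBall, dist_zero_right, EuclideanSpace.norm_eq]
    have h0 := hx 0
    have h1 := hx 1
    simp only [Set.mem_Icc] at h0 h1
    have hs : ∑ i : Fin 2, ‖x i‖ ^ 2 ≤ 4 := by
      rw [Fin.sum_univ_two, Real.norm_eq_abs, Real.norm_eq_abs]
      nlinarith [sq_abs (x 0), sq_abs (x 1), h0.1, h0.2, h1.1, h1.2]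
    calc Real.sqrt (∑ i : Fin 2, ‖x i‖ ^ 2) ≤ Real.sqrt 4 := Real.sqrt_le_sqrt hs
      _ = 2 := by
        rw [show (4:ℝ) = 2 ^ 2 by norm_num, Real.sqrt_sq (by norm_num)]

lemma volume_unitSq : volume unitSq = 1 := by
  have h : unitSq = (MeasurableEquiv.toLp 2 (Fin 2 → ℝ)).symm ⁻¹'
      (Set.univ.pi fun _ : Fin 2 => Set.Icc (0:ℝ) 1) := by
    ext x
    rw [Set.mem_preimage, Set.mem_univ_pi]
    exact Iff.rfl
  rw [h, (EuclideanSpace.volume_preserving_symm_measurableEquiv_toLp (Fin 2)).measure_preimage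
    ((MeasurableSet.univ_pi fun _ => measurableSet_Icc).nullMeasurableSet)]
  rw [volume_pi_pi]
  simp [Real.volume_Icc]


lemma exists_edge (T : Finset E2) (h2 : 2 ≤ T.card) :
    ∃ p ∈ T, ∃ q ∈ T, p ≠ q ∧
      ∀ t ∈ T, 0 ≤ (q 0 - p 0) * (t 1 - p 1) - (q 1 - p 1) * (t 0 - p 0) := by
  have hne : T.Nonempty := Finset.card_pos.1 (by omega)
  obtain ⟨a, haT, hamin⟩ := T.exists_min_image (fun t => t 0) hne
  obtain ⟨p, hpmem, hpmin⟩ := (T.filter fun t => t 0 = a 0).exists_min_image (fun t => t 1)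
      ⟨a, by simp [haT]⟩
  rw [Finset.mem_filter] at hpmem
  obtain ⟨hpT, hpa⟩ := hpmem
  have hmin0 : ∀ t ∈ T, p 0 ≤ t 0 := fun t ht => by rw [hpa]; exact hamin t ht
  have hmin1 : ∀ t ∈ T, t 0 = p 0 → p 1 ≤ t 1 := fun t ht h =>
    hpmin t (Finset.mem_filter.2 ⟨ht, by rw [h, hpa]⟩)
  have hne' : (T.erase p).Nonempty := by
    rw [← Finset.card_pos, Finset.card_erase_of_mem hpT]; omega
  obtain ⟨q, hq', hqmin⟩ := (T.erase p).exists_min_image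
      (fun t => if t 0 = p 0 then Real.pi / 2 else Real.arctan ((t 1 - p 1) / (t 0 - p 0))) hne'
  have hqp : q ≠ p := Finset.ne_of_mem_erase hq'
  have hqT : q ∈ T := Finset.mem_of_mem_erase hq'
  refine ⟨p, hpT, q, hqT, fun h => hqp h.symm, ?_⟩
  intro t htT
  by_cases hteq : t = p
  · subst hteq
    have hz : (q 0 - t 0) * (t 1 - t 1) - (q 1 - t 1) * (t 0 - t 0) = 0 := by ring
    linarith
  · have htmem : t ∈ T.erase p := Finset.mem_erase.2 ⟨hteq, htT⟩
    have hq0 : p 0 ≤ q 0 := hmin0 q hqT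
    have ht0 : p 0 ≤ t 0 := hmin0 t htT
    have hkey := hqmin t htmem
    by_cases ht0e : t 0 = p 0
    · have ht1 : p 1 < t 1 := by
        refine lt_of_le_of_ne (hmin1 t htT ht0e) fun h => hteq (pt_ext ht0e h.symm)
      have e1 : (q 1 - p 1) * (t 0 - p 0) = 0 := by rw [ht0e]; ring
      have e2 : 0 ≤ (q 0 - p 0) * (t 1 - p 1) :=
        mul_nonneg (by linarith) (by linarith)
      linarith
    · have ht0lt : p 0 < t 0 := lt_of_le_of_ne ht0 (Ne.symm ht0e)
      rw [if_neg ht0e] at hkey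
      by_cases hq0e : q 0 = p 0
      · rw [if_pos hq0e] at hkey
        have := Real.arctan_lt_pi_div_two ((t 1 - p 1) / (t 0 - p 0))
        linarith
      · have hq0lt : p 0 < q 0 := lt_of_le_of_ne hq0 (Ne.symm hq0e)
        rw [if_neg hq0e] at hkey
        have hdiv : (q 1 - p 1) / (q 0 - p 0) ≤ (t 1 - p 1) / (t 0 - p 0) :=
          (Real.arctan_strictMono.le_iff_le).1 hkey
        rw [div_le_div_iff₀ (by linarith) (by linarith)] at hdiv
        nlinarith [hdiv]


theorem aux : ∀ (n : ℕ) (R : Set E2) (S : Finset E2), Convex ℝ R → IsCompact R → R ⊆ unitSq →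
    (S.filter fun p => p ∈ interior R).card ≤ n →
    ∃ C : Set E2, Convex ℝ C ∧ IsCompact C ∧ C ⊆ R ∧ (∀ p ∈ S, p ∉ interior C) ∧
      2 / ((n : ℝ) + 4) * (volume R).toReal ≤ (volume C).toReal := by
  intro n
  induction n using Nat.strong_induction_on with
  | _ n IH =>
  intro R S hconv hcomp hsub hcard
  have hRfin : volume R ≠ ⊤ := by
    refine ne_top_of_le_ne_top ?_ (measure_mono hsub)
    rw [volume_unitSq]; exact ENNReal.one_ne_top
  have hA0 : 0 ≤ (volume R).toReal := ENNReal.toReal_nonneg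
  set T := S.filter fun p => p ∈ interior R with hTdef
  have hTcard : T.card ≤ n := hcard
  have hTmem : ∀ t, t ∈ T ↔ t ∈ S ∧ t ∈ interior R := fun t => Finset.mem_filter
  -- key fact used thrice: areas of the two cut pieces
  have keyvol : ∀ a b c : ℝ,
      (volume R).toReal ≤ (volume (R ∩ halfLe a b c)).toReal +
        (volume (R ∩ halfLe (-a) (-b) (-c))).toReal := by
    intro a b c
    have hf1 : volume (R ∩ halfLe a b c) ≠ ⊤ :=
      ne_top_of_le_ne_top hRfin (measure_mono Set.inter_subset_left)
    have hf2 : volume (R ∩ halfLe (-a) (-b) (-c)) ≠ ⊤ :=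
      ne_top_of_le_ne_top hRfin (measure_mono Set.inter_subset_left)
    calc (volume R).toReal
        ≤ ((volume (R ∩ halfLe a b c)) + volume (R ∩ halfLe (-a) (-b) (-c))).toReal :=
          ENNReal.toReal_mono (by rw [ENNReal.add_ne_top]; exact ⟨hf1, hf2⟩) (volume_cut R a b c)
      _ = _ := ENNReal.toReal_add hf1 hf2
  rcases Nat.lt_or_ge T.card 2 with hTlt | hTge
  · rcases Nat.lt_or_ge T.card 1 with hT0 | hT1
    · -- no interior points: take R itself
      refine ⟨R, hconv, hcomp, subset_rfl, ?_, ?_⟩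
      · intro p hpS hpint
        have hmem : p ∈ T := (hTmem p).2 ⟨hpS, hpint⟩
        have hTe : T = ∅ := Finset.card_eq_zero.1 (by omega)
        rw [hTe] at hmem
        simp at hmem
      · have h24 : 2 / ((n:ℝ) + 4) ≤ 1 := by
          rw [div_le_one (by positivity)]
          have : (0:ℝ) ≤ n := Nat.cast_nonneg n
          linarith
        exact mul_le_of_le_one_left hA0 h24
    · -- exactly one interior point p: cut vertically through p
      have h1 : T.card = 1 := by omega
      obtain ⟨p, hp⟩ := Finset.card_eq_one.1 h1
      have honly : ∀ s ∈ S, s ∈ interior R → s = p := by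
        intro s hsS hsint
        have : s ∈ T := (hTmem s).2 ⟨hsS, hsint⟩
        rw [hp] at this; exact Finset.mem_singleton.1 this
      have hab1 : ¬((1:ℝ) = 0 ∧ (0:ℝ) = 0) := by norm_num
      have hab2 : ¬(-(1:ℝ) = 0 ∧ -(0:ℝ) = 0) := by norm_num
      have hc1 := cut_piece R S hconv hcomp 1 0 (p 0) hab1
        (fun s hsS hsint => by rw [honly s hsS hsint]; norm_num)
      have hc2 := cut_piece R S hconv hcomp (-1) (-0) (-(p 0)) hab2
        (fun s hsS hsint => by rw [honly s hsS hsint]; norm_num)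
      have hkv := keyvol 1 0 (p 0)
      have hfrac : 2 / ((n:ℝ) + 4) ≤ 1 / 2 := by
        rw [div_le_div_iff₀ (by positivity) (by norm_num)]
        have : (0:ℝ) ≤ n := Nat.cast_nonneg n
        linarith
      set P1 := R ∩ halfLe 1 0 (p 0) with hP1d
      set P2 := R ∩ halfLe (-1) (-0) (-(p 0)) with hP2d
      rcases le_total ((volume P1).toReal) ((volume P2).toReal) with hle | hle
      · refine ⟨_, hc2.1, hc2.2.1, hc2.2.2.1, hc2.2.2.2, ?_⟩
        have hhint : 2 / ((n:ℝ) + 4) * (volume R).toReal ≤ 1 / 2 * (volume R).toReal :=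
          mul_le_mul_of_nonneg_right hfrac hA0
        exact le_trans hhint (by linarith [hkv, hle])
      · refine ⟨_, hc1.1, hc1.2.1, hc1.2.2.1, hc1.2.2.2, ?_⟩
        have hhint : 2 / ((n:ℝ) + 4) * (volume R).toReal ≤ 1 / 2 * (volume R).toReal :=
          mul_le_mul_of_nonneg_right hfrac hA0
        exact le_trans hhint (by linarith [hkv, hle])
  · -- at least two interior points: hull edge cut
    obtain ⟨p, hpT, q, hqT, hpq, hcross⟩ := exists_edge T hTge
    set a : ℝ := -(q 1 - p 1) with hadef
    set b : ℝ := q 0 - p 0 with hbdef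
    set c : ℝ := a * p 0 + b * p 1 with hcdef
    have hab : ¬(a = 0 ∧ b = 0) := by
      rintro ⟨ha, hb⟩
      refine hpq (pt_ext ?_ ?_)
      · rw [hbdef] at hb; linarith
      · rw [hadef] at ha; linarith
    have hab' : ¬(-a = 0 ∧ -b = 0) := by
      rintro ⟨ha, hb⟩; exact hab ⟨by linarith, by linarith⟩
    have hline : ∀ t ∈ T, c ≤ a * t 0 + b * t 1 := by
      intro t ht
      have h' := hcross t ht
      rw [hbdef] at h'
      rw [hcdef, hadef, hbdef]
      nlinarith [h']
    have hqline : a * q 0 + b * q 1 = c := by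
      rw [hcdef, hadef, hbdef]; ring
    have hc1 := cut_piece R S hconv hcomp a b c hab
      (fun s hsS hsint => hline s ((hTmem s).2 ⟨hsS, hsint⟩))
    set P2 : Set E2 := R ∩ halfLe (-a) (-b) (-c) with hP2def
    have hP2conv : Convex ℝ P2 := hconv.inter (convex_halfLe _ _ _)
    have hP2comp : IsCompact P2 := hcomp.inter_right (closed_halfLe _ _ _)
    have hP2sub : P2 ⊆ R := Set.inter_subset_left
    have hkv := keyvol a b c
    by_cases hbig : 2 / ((n:ℝ) + 4) * (volume R).toReal ≤ (volume (R ∩ halfLe a b c)).toReal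
    · exact ⟨_, hc1.1, hc1.2.1, hc1.2.2.1, hc1.2.2.2, hbig⟩
    · have hn2 : 2 ≤ n := le_trans hTge hTcard
      -- points strictly inside P2 avoid p and q
      have hcount : (S.filter fun s => s ∈ interior P2).card ≤ n - 2 := by
        have hsubset : (S.filter fun s => s ∈ interior P2) ⊆ (T.erase p).erase q := by
          intro s hs
          rw [Finset.mem_filter] at hs
          obtain ⟨hsS, hsint⟩ := hs
          have hsR : s ∈ interior R := interior_mono Set.inter_subset_left hsint
          have hsT : s ∈ T := (hTmem s).2 ⟨hsS, hsR⟩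
          have hstrict : -a * s 0 + -b * s 1 < -c :=
            interior_subset_lt hab' Set.inter_subset_right hsint
          have hsp : s ≠ p := by
            intro h; rw [h] at hstrict
            rw [hcdef] at hstrict; linarith
          have hsq : s ≠ q := by
            intro h; rw [h] at hstrict; linarith [hqline]
          exact Finset.mem_erase.2 ⟨hsq, Finset.mem_erase.2 ⟨hsp, hsT⟩⟩
        have hqe : q ∈ T.erase p := Finset.mem_erase.2 ⟨fun h => hpq h.symm, hqT⟩
        have := Finset.card_le_card hsubset
        rw [Finset.card_erase_of_mem hqe, Finset.card_erase_of_mem hpT] at this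
        omega
      obtain ⟨C, hCconv, hCcomp, hCsub, hCempty, hCvol⟩ :=
        IH (n - 2) (by omega) P2 S hP2conv hP2comp (hP2sub.trans hsub) hcount
      refine ⟨C, hCconv, hCcomp, hCsub.trans hP2sub, hCempty, ?_⟩
      have hre : ((n - 2 : ℕ) : ℝ) = (n : ℝ) - 2 := by
        rw [Nat.cast_sub hn2]; norm_num
      rw [hre] at hCvol
      have hxn : (2:ℝ) ≤ (n:ℝ) := by exact_mod_cast hn2
      set A : ℝ := (volume R).toReal
      set A1 : ℝ := (volume (R ∩ halfLe a b c)).toReal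
      set A2 : ℝ := (volume P2).toReal with hA2def
      have hA20 : 0 ≤ A2 := ENNReal.toReal_nonneg
      have e2' : A1 * ((n:ℝ) + 4) < 2 * A := by
        rw [not_le] at hbig
        have h4 : (0:ℝ) < (n:ℝ) + 4 := by linarith
        rw [div_mul_eq_mul_div, lt_div_iff₀ h4] at hbig
        linarith
      have hs : ((n:ℝ) - 2) + 4 = (n:ℝ) + 2 := by ring
      rw [hs] at hCvol
      have h4 : (0:ℝ) < (n:ℝ) + 4 := by linarith
      have h2 : (0:ℝ) < (n:ℝ) + 2 := by linarith
      have hstep : 2 / ((n:ℝ) + 4) * A ≤ 2 / ((n:ℝ) + 2) * A2 := by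
        rw [div_mul_eq_mul_div, div_mul_eq_mul_div, div_le_div_iff₀ h4 h2]
        have e3 : (A - A1) * ((n:ℝ) + 4) ≤ A2 * ((n:ℝ) + 4) :=
          mul_le_mul_of_nonneg_right (by linarith [hkv]) (le_of_lt h4)
        nlinarith [e3, e2']
      linarith [hstep, hCvol]

theorem main (n : ℕ) (S : Finset E2)
    (hcard : S.card = n) :
    ∃ C : Set E2,
      Convex ℝ C ∧ IsCompact C ∧
      C ⊆ unitSq ∧
      (∀ p ∈ S, p ∉ interior C) ∧
      2 / ((n : ℝ) + 4) ≤ (volume C).toReal := by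
  obtain ⟨C, h1, h2, h3, h4, h5⟩ := aux n unitSq S convex_unitSq isCompact_unitSq subset_rfl
    (le_trans (Finset.card_filter_le _ _) (le_of_eq hcard))
  refine ⟨C, h1, h2, h3, h4, ?_⟩
  rw [volume_unitSq] at h5
  simpa using h5

end EmptyConvex

end

/-- Amid any `n` points in the unit square there is an empty convex body of
area at least `2/(n+4)`. -/
theorem empty_convex_body_area (n : ℕ) (S : Finset (EuclideanSpace ℝ (Fin 2)))
    (hcard : S.card = n)
    (hS : (S : Set (EuclideanSpace ℝ (Fin 2))) ⊆
      {x | ∀ j : Fin 2, x j ∈ Set.Icc (0 : ℝ) 1}) :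
    ∃ C : Set (EuclideanSpace ℝ (Fin 2)),
      Convex ℝ C ∧ IsCompact C ∧
      C ⊆ {x | ∀ j : Fin 2, x j ∈ Set.Icc (0 : ℝ) 1} ∧
      (∀ p ∈ S, p ∉ interior C) ∧
      2 / ((n : ℝ) + 4) ≤ (volume C).toReal := by
  obtain ⟨C, h1, h2, h3, h4, h5⟩ := EmptyConvex.main n S hcard
  exact ⟨C, h1, h2, h3, h4, h5⟩
end

section
/- Let B₁ be a rectangle in the plane with center o, side lengths a ≤ b satisfying a/√(a²+b²) > π/(5n), and let B₂ be the rectangle obtained by rotating B₁ about o by an angle of at most π/(5n). Then B₁ ⊆ 2B₂, where 2B₂ is the dilation of B₂ by factor 2 about o. -/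
open Real

/-- Rotation of the plane about the origin by angle `θ`. -/
noncomputable def rot (θ : ℝ) (x : ℝ × ℝ) : ℝ × ℝ :=
  (Real.cos θ * x.1 - Real.sin θ * x.2, Real.sin θ * x.1 + Real.cos θ * x.2)

/-- Let `B₁` be a rectangle with center `o`, orthonormal axes `u, v` and side
lengths `a ≤ b` satisfying `a/√(a²+b²) > π/(5n)`, and let `B₂` be obtained by
rotating `B₁` about `o` by an angle `θ` with `|θ| ≤ π/(5n)`. Then `B₁ ⊆ 2B₂`,
where `2B₂` is the dilation of `B₂` by factor `2` about `o`. -/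
theorem rotated_rectangle_cover (n : ℕ) (hn : 1 ≤ n) (a b : ℝ)
    (ha : 0 < a) (hab : a ≤ b)
    (hthin : π / (5 * n) < a / Real.sqrt (a ^ 2 + b ^ 2))
    (o u v : ℝ × ℝ)
    (hu : u.1 ^ 2 + u.2 ^ 2 = 1) (hv : v.1 ^ 2 + v.2 ^ 2 = 1)
    (huv : u.1 * v.1 + u.2 * v.2 = 0)
    (B₁ B₂ : Set (ℝ × ℝ))
    (hB₁ : B₁ = {x | ∃ s t : ℝ, |s| ≤ a / 2 ∧ |t| ≤ b / 2 ∧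
      x = o + s • u + t • v})
    (θ : ℝ) (hθ : |θ| ≤ π / (5 * n))
    (hB₂ : B₂ = (fun x => o + rot θ (x - o)) '' B₁) :
    B₁ ⊆ (fun x => o + (2 : ℝ) • (x - o)) '' B₂ := by
  have hb : 0 < b := lt_of_lt_of_le ha hab
  -- √(a²+b²) ≥ b
  have hsqrt : b ≤ Real.sqrt (a ^ 2 + b ^ 2) := by
    have h := Real.sqrt_le_sqrt (show b ^ 2 ≤ a ^ 2 + b ^ 2 by nlinarith)
    rwa [Real.sqrt_sq hb.le] at h
  have hsqrtpos : 0 < Real.sqrt (a ^ 2 + b ^ 2) := lt_of_lt_of_le hb hsqrt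
  -- key smallness: b * |sin θ| ≤ a
  have hsin : b * |Real.sin θ| ≤ a := by
    have h1 : |Real.sin θ| ≤ π / (5 * n) :=
      le_trans (Real.abs_sin_le_abs) hθ
    have h2 : a / Real.sqrt (a ^ 2 + b ^ 2) ≤ a / b :=
      div_le_div_of_nonneg_left ha.le hb hsqrt
    have h3 : |Real.sin θ| ≤ a / b := le_trans h1 (le_trans hthin.le h2)
    calc b * |Real.sin θ| ≤ b * (a / b) := by
          exact mul_le_mul_of_nonneg_left h3 hb.le
      _ = a := by field_simp
  set c := Real.cos θ with hc
  set S := Real.sin θ with hS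
  have pyth : c ^ 2 + S ^ 2 = 1 := by
    rw [hc, hS]; rw [add_comm]; exact Real.sin_sq_add_cos_sq θ
  have hcos1 : |c| ≤ 1 := by rw [hc]; exact Real.abs_cos_le_one θ
  set ε := u.1 * v.2 - u.2 * v.1 with hε
  have hε2 : ε ^ 2 = 1 := by
    rw [hε]
    linear_combination (v.1 ^ 2 + v.2 ^ 2) * hu + hv - (u.1 * v.1 + u.2 * v.2) * huv
  have hεabs : |ε| = 1 := by
    have h := sq_abs ε
    have h2 := abs_nonneg ε
    nlinarith
  intro x hx
  rw [hB₁] at hx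
  obtain ⟨s, t, hs, ht, hxeq⟩ := hx
  set s' := (s * c + t * S * ε) / 2 with hs'
  set t' := (t * c - s * S * ε) / 2 with ht'
  -- bounds on s', t'
  have hs'bound : |s'| ≤ a / 2 := by
    rw [hs', abs_div]
    rw [abs_of_nonneg (by norm_num : (0:ℝ) ≤ 2)]
    have h1 : |s * c + t * S * ε| ≤ |s| * |c| + |t| * |S| * |ε| := by
      calc |s * c + t * S * ε| ≤ |s * c| + |t * S * ε| := abs_add_le _ _
        _ = |s| * |c| + |t| * |S| * |ε| := by rw [abs_mul, abs_mul, abs_mul]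
    have h2 : |s| * |c| ≤ a / 2 := by
      calc |s| * |c| ≤ (a / 2) * 1 :=
            mul_le_mul hs hcos1 (abs_nonneg _) (by linarith)
        _ = a / 2 := by ring
    have h3 : |t| * |S| * |ε| ≤ a / 2 := by
      rw [hεabs, mul_one]
      calc |t| * |S| ≤ (b / 2) * |S| :=
            mul_le_mul_of_nonneg_right ht (abs_nonneg _)
        _ = (b * |S|) / 2 := by ring
        _ ≤ a / 2 := by rw [hS]; linarith
    linarith
  have ht'bound : |t'| ≤ b / 2 := by
    rw [ht', abs_div]
    rw [abs_of_nonneg (by norm_num : (0:ℝ) ≤ 2)]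
    have h1 : |t * c - s * S * ε| ≤ |t| * |c| + |s| * |S| * |ε| := by
      calc |t * c - s * S * ε| ≤ |t * c| + |s * S * ε| := abs_sub _ _
        _ = |t| * |c| + |s| * |S| * |ε| := by rw [abs_mul, abs_mul, abs_mul]
    have h2 : |t| * |c| ≤ b / 2 := by
      calc |t| * |c| ≤ (b / 2) * 1 :=
            mul_le_mul ht hcos1 (abs_nonneg _) (by linarith)
        _ = b / 2 := by ring
    have h3 : |s| * |S| * |ε| ≤ b / 2 := by
      rw [hεabs, mul_one]
      have hS1 : |S| ≤ 1 := by rw [hS]; exact Real.abs_sin_le_one θ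
      calc |s| * |S| ≤ (a / 2) * 1 :=
            mul_le_mul hs hS1 (abs_nonneg _) (by linarith)
        _ = a / 2 := by ring
        _ ≤ b / 2 := by linarith
    linarith
  -- the preimage point
  refine ⟨o + rot θ (s' • u + t' • v), ?_, ?_⟩
  · rw [hB₂]
    refine ⟨o + s' • u + t' • v, ?_, ?_⟩
    · rw [hB₁]; exact ⟨s', t', hs'bound, ht'bound, rfl⟩
    · show o + rot θ (o + s' • u + t' • v - o) = o + rot θ (s' • u + t' • v)
      have h : o + s' • u + t' • v - o = s' • u + t' • v := by abel
      rw [h]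
  · show o + (2 : ℝ) • (o + rot θ (s' • u + t' • v) - o) = x
    have h0 : o + rot θ (s' • u + t' • v) - o = rot θ (s' • u + t' • v) := by abel
    rw [h0, hxeq]
    have key : (2 : ℝ) • rot θ (s' • u + t' • v) = s • u + t • v := by
      apply Prod.ext
      · show (2 : ℝ) * (c * (s' • u + t' • v).1 - S * (s' • u + t' • v).2) =
          (s • u + t • v).1
        simp only [Prod.fst_add, Prod.snd_add, Prod.smul_fst, Prod.smul_snd,
          smul_eq_mul, hs', ht', hε]
        linear_combination (s * u.1 + t * v.1) * pyth
          + S ^ 2 * s * (u.1 * hv - v.1 * huv)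
          - S * s * c * (v.2 * huv - u.2 * hv)
          + S * t * c * (v.2 * hu - u.2 * huv)
          - S ^ 2 * t * (u.1 * huv - v.1 * hu)
      · show (2 : ℝ) * (S * (s' • u + t' • v).1 + c * (s' • u + t' • v).2) =
          (s • u + t • v).2
        simp only [Prod.fst_add, Prod.snd_add, Prod.smul_fst, Prod.smul_snd,
          smul_eq_mul, hs', ht', hε]
        linear_combination (s * u.2 + t * v.2) * pyth
          + S * s * (-S * (-u.2 * hv + v.2 * huv) - c * (u.1 * hv - v.1 * huv))
          + S * t * (S * (v.2 * hu - u.2 * huv) + c * (-v.1 * hu + u.1 * huv))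
    rw [key]; abel
end

section
/- Suppose for every (h+1)-element subset T of a finite set B ⊂ ℝ^d there is a point of B in the interior of conv(T). Then in any Steiner convex partition of a set S ⊇ B (with B in the interior of conv(S)), each tile is incident to (has on its boundary) at most h points of B, and consequently the number of tiles is at least 2(|B|)/h, counting each interior point of B via two incident tiles. -/
open scoped Classical

/-- If every `(h+1)`-element subset of `B` contains a point of `B` in the
interior of its convex hull (a generalized Horton set), then in any Steiner
convex partition of `S ⊇ B` (with `B` interior to `conv S`), each tile is
incident to at most `h` points of `B`, and the number of tiles is at least
`2|B|/h`. -/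
theorem horton_lower_bound (d h : ℕ) (hh : 1 ≤ h)
    (S B : Finset (EuclideanSpace ℝ (Fin d))) (hBS : B ⊆ S)
    (hHorton : ∀ T ⊆ B, T.card = h + 1 →
      ∃ b ∈ B, b ∈ interior (convexHull ℝ (T : Set (EuclideanSpace ℝ (Fin d)))))
    (hBint : (B : Set (EuclideanSpace ℝ (Fin d))) ⊆
      interior (convexHull ℝ (S : Set (EuclideanSpace ℝ (Fin d)))))
    (𝒯 : Finset (Set (EuclideanSpace ℝ (Fin d))))
    (h𝒯 : IsSteinerConvexPartition d S 𝒯) :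
    (∀ t ∈ 𝒯, (B.filter (fun b => b ∈ t)).card ≤ h) ∧
    (2 * (B.card : ℚ)) / h ≤ (𝒯.card : ℚ) := by

  obtain ⟨hconv, hcover, hpw⟩ := h𝒯
  have part1 : ∀ t ∈ 𝒯, (B.filter (fun b => b ∈ t)).card ≤ h := by
    intro t ht
    by_contra hlt
    push_neg at hlt
    obtain ⟨T, hTsub, hTcard⟩ := Finset.exists_subset_card_eq hlt
    have hTB : T ⊆ B := hTsub.trans (Finset.filter_subset _ _)
    obtain ⟨b, hbB, hbint⟩ := hHorton T hTB hTcard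
    have hTt : (T : Set (EuclideanSpace ℝ (Fin d))) ⊆ t := by
      intro x hx
      have := hTsub hx
      exact (Finset.mem_filter.mp this).2
    have hhull : convexHull ℝ (T : Set (EuclideanSpace ℝ (Fin d))) ⊆ t :=
      convexHull_min hTt (hconv t ht).1
    have : b ∈ interior t := interior_mono hhull hbint
    exact (hconv t ht).2.2 b (hBS hbB) this
  refine ⟨part1, ?_⟩
  -- every point of B is in at least two tiles
  have key : ∀ b ∈ B, 2 ≤ (𝒯.filter (fun t => b ∈ t)).card := by
    intro b hbB
    have hbconv : b ∈ convexHull ℝ (S : Set (EuclideanSpace ℝ (Fin d))) :=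
      interior_subset (hBint hbB)
    have hbU : b ∈ ⋃ t ∈ 𝒯, t := by rw [hcover]; exact hbconv
    obtain ⟨t₁, ht₁, hbt₁⟩ := by
      simpa using hbU
    have hbni : b ∉ interior t₁ := (hconv t₁ ht₁).2.2 b (hBS hbB)
    have hbcl : b ∈ closure (t₁ᶜ) := by
      rw [closure_compl]; exact hbni
    set C : Set (EuclideanSpace ℝ (Fin d)) := ⋃ t ∈ 𝒯.erase t₁, t with hC
    have hCclosed : IsClosed C := by
      apply Set.Finite.isClosed_biUnion (Finset.finite_toSet _)
      intro t ht'
      have : t ∈ 𝒯 := by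
        have := ht'; simp only [Finset.coe_erase, Set.mem_diff, Finset.mem_coe] at this
        exact this.1
      exact (hconv t this).2.1.isClosed
    have hbC : b ∈ C := by
      rw [← hCclosed.closure_eq]
      rw [mem_closure_iff]
      intro U hU hbUmem
      have hopen : IsOpen (U ∩ interior (convexHull ℝ (S : Set (EuclideanSpace ℝ (Fin d))))) :=
        hU.inter isOpen_interior
      have hbmem : b ∈ U ∩ interior (convexHull ℝ (S : Set (EuclideanSpace ℝ (Fin d)))) :=
        ⟨hbUmem, hBint hbB⟩
      rw [mem_closure_iff] at hbcl
      obtain ⟨x, hx1, hx2⟩ := hbcl _ hopen hbmem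
      have hxU : x ∈ ⋃ t ∈ 𝒯, t := by
        rw [hcover]; exact interior_subset hx1.2
      obtain ⟨t₂, ht₂, hxt₂⟩ := by simpa using hxU
      have hne : t₂ ≠ t₁ := by
        rintro rfl; exact hx2 hxt₂
      exact ⟨x, hx1.1, Set.mem_biUnion (Finset.mem_erase.mpr ⟨hne, ht₂⟩) hxt₂⟩
    rw [hC, Set.mem_iUnion₂] at hbC
    obtain ⟨t₂, ht₂mem, hbt₂⟩ := hbC
    have ht₂ne : t₂ ≠ t₁ := (Finset.mem_erase.mp ht₂mem).1
    have ht₂𝒯 : t₂ ∈ 𝒯 := (Finset.mem_erase.mp ht₂mem).2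
    apply Finset.one_lt_card.mpr
    exact ⟨t₁, Finset.mem_filter.mpr ⟨ht₁, hbt₁⟩, t₂,
      Finset.mem_filter.mpr ⟨ht₂𝒯, hbt₂⟩, fun e => ht₂ne e.symm⟩
  -- double counting
  have hsum : ∑ t ∈ 𝒯, (B.filter (fun b => b ∈ t)).card
      = ∑ b ∈ B, (𝒯.filter (fun t => b ∈ t)).card := by
    simp only [Finset.card_filter]
    rw [Finset.sum_comm]
  have h1 : 2 * B.card ≤ ∑ t ∈ 𝒯, (B.filter (fun b => b ∈ t)).card := by
    rw [hsum]
    calc 2 * B.card = ∑ _b ∈ B, 2 := by rw [Finset.sum_const, smul_eq_mul, mul_comm]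
    _ ≤ _ := Finset.sum_le_sum key
  have h2 : ∑ t ∈ 𝒯, (B.filter (fun b => b ∈ t)).card ≤ 𝒯.card * h := by
    calc _ ≤ ∑ _t ∈ 𝒯, h := Finset.sum_le_sum part1
    _ = 𝒯.card * h := by rw [Finset.sum_const, smul_eq_mul]
  have hfinal : 2 * B.card ≤ 𝒯.card * h := h1.trans h2
  have hhq : (0:ℚ) < (h:ℚ) := by exact_mod_cast hh
  rw [div_le_iff₀ hhq]
  exact_mod_cast hfinal
end
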